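/- arXiv:2310.08563 — 4 statements merged into one kernel-verified Lean document; each statement's English description precedes it below -/
import Mathlib

section
/- Let r and d be positive integers, and let S be a finite set of points in ℝ^d with at least (d+1)(r-1)+1 points. Then there exists a partition of S into r pairwise disjoint nonempty parts whose convex hulls have a common point. -/
open Finset

open RealInnerProductSpace

noncomputable instance (d : ℕ) : DecidableEq (EuclideanSpace ℝ (Fin d)) :=
  Classical.decEq _

lemma inner_ge_of_norm_min {E : Type*} [NormedAddCommGroup E] [InnerProductSpace ℝ E]
    {K : Set E} (hK : Convex ℝ K) {x : E} (hx : x ∈ K)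
    (hmin : ∀ y ∈ K, ‖x‖ ≤ ‖y‖) {y : E} (hy : y ∈ K) :
    ‖x‖ ^ 2 ≤ ⟪x, y⟫ := by
  by_contra h
  push_neg at h
  have hc : ⟪x, y - x⟫ < 0 := by
    rw [inner_sub_right, real_inner_self_eq_norm_sq]; linarith
  have hyx : y - x ≠ 0 := by
    intro h0; rw [h0, inner_zero_right] at hc; exact lt_irrefl 0 hc
  have hs : (0:ℝ) < ‖y - x‖ ^ 2 := by
    have : 0 < ‖y - x‖ := norm_pos_iff.mpr hyx
    positivity
  set c : ℝ := ⟪x, y - x⟫ with hcdef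
  set s : ℝ := ‖y - x‖ ^ 2 with hsdef
  set t : ℝ := min 1 (-c / s) with htdef
  have ht0 : 0 < t := lt_min one_pos (div_pos (by linarith) hs)
  have ht1 : t ≤ 1 := min_le_left _ _
  have hts : t * s ≤ -c := (le_div_iff₀ hs).mp (min_le_right _ _)
  have hpK : x + t • (y - x) ∈ K := by
    have := hK hx hy (by linarith : (0:ℝ) ≤ 1 - t) ht0.le (by ring)
    convert this using 1
    simp [smul_sub, sub_smul]
    abel
  have hnorm : ‖x + t • (y - x)‖ ^ 2 = ‖x‖ ^ 2 + 2 * (t * c) + t ^ 2 * s := by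
    rw [norm_add_sq_real, real_inner_smul_right, norm_smul, mul_pow, hcdef, hsdef]
    rw [Real.norm_eq_abs, abs_of_pos ht0]
  have hlt : ‖x + t • (y - x)‖ ^ 2 < ‖x‖ ^ 2 := by nlinarith
  have := hmin _ hpK
  nlinarith [norm_nonneg (x + t • (y - x)), norm_nonneg x]

lemma exists_convex_weights {E : Type*} [AddCommGroup E] [Module ℝ E] [DecidableEq E]
    {ι : Type*} [Fintype ι] [DecidableEq ι] {f : ι → E} {x : E}
    (hx : x ∈ convexHull ℝ (Set.range f)) :
    ∃ w : ι → ℝ, (∀ i, 0 ≤ w i) ∧ ∑ i, w i = 1 ∧ ∑ i, w i • f i = x := by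
  have hr : Set.range f = ↑(Finset.image f Finset.univ) := by
    simp
  rw [hr, Finset.convexHull_eq] at hx
  obtain ⟨w', hw0, hw1, hwx⟩ := hx
  set s := Finset.image f Finset.univ with hs
  set c : E → ℕ := fun y => (Finset.univ.filter (fun i => f i = y)).card with hc
  have hcpos : ∀ y ∈ s, 0 < c y := by
    intro y hy
    obtain ⟨i, -, rfl⟩ := Finset.mem_image.mp hy
    exact Finset.card_pos.mpr ⟨i, by simp⟩
  refine ⟨fun i => w' (f i) / c (f i), ?_, ?_, ?_⟩
  · intro i
    have := hw0 (f i) (Finset.mem_image_of_mem f (Finset.mem_univ i))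
    have := hcpos (f i) (Finset.mem_image_of_mem f (Finset.mem_univ i))
    positivity
  · rw [← Finset.sum_fiberwise_of_maps_to (fun i _ => Finset.mem_image_of_mem f (Finset.mem_univ i))
      (fun i => w' (f i) / c (f i))]
    rw [← hw1]
    apply Finset.sum_congr rfl
    intro y hy
    have h1 : ∀ i ∈ Finset.univ.filter (fun i => f i = y), w' (f i) / (c (f i) : ℝ) = w' y / c y := by
      intro i hi
      rw [(Finset.mem_filter.mp hi).2]
    rw [Finset.sum_congr rfl h1, Finset.sum_const]
    have := hcpos y hy
    rw [nsmul_eq_mul]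
    field_simp
    exact mul_comm _ _
  · rw [← Finset.sum_fiberwise_of_maps_to (fun i _ => Finset.mem_image_of_mem f (Finset.mem_univ i))
      (fun i => (w' (f i) / c (f i)) • f i)]
    have hx2 : x = ∑ y ∈ s, w' y • y := by
      rw [← hwx, Finset.centerMass, hw1]
      simp
    rw [hx2]
    apply Finset.sum_congr rfl
    intro y hy
    have h1 : ∀ i ∈ Finset.univ.filter (fun i => f i = y),
        (w' (f i) / (c (f i) : ℝ)) • f i = (w' y / c y) • y := by
      intro i hi
      rw [(Finset.mem_filter.mp hi).2]
    rw [Finset.sum_congr rfl h1, Finset.sum_const]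
    have hcy := hcpos y hy
    rw [← Nat.cast_smul_eq_nsmul ℝ, smul_smul]
    congr 1
    field_simp
    exact mul_comm _ _

theorem colorful_caratheodory {E : Type*} [NormedAddCommGroup E] [InnerProductSpace ℝ E]
    [FiniteDimensional ℝ E] {n : ℕ} (hn : Module.finrank ℝ E ≤ n)
    (C : Fin (n + 1) → Finset E) (hC : ∀ i, (0 : E) ∈ convexHull ℝ (C i : Set E)) :
    ∃ f : Fin (n + 1) → E, (∀ i, f i ∈ C i) ∧ (0 : E) ∈ convexHull ℝ (Set.range f) := by
  classical
  set Φ : Finset (Fin (n + 1) → E) := Fintype.piFinset C with hΦ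
  have hΦne : Φ.Nonempty := by
    have : ∀ i, ∃ p, p ∈ C i := by
      intro i
      have : (convexHull ℝ (C i : Set E)).Nonempty := ⟨0, hC i⟩
      obtain ⟨p, hp⟩ := convexHull_nonempty_iff.mp this
      exact ⟨p, hp⟩
    choose p hp using this
    exact ⟨p, Fintype.mem_piFinset.mpr hp⟩
  set D : (Fin (n + 1) → E) → ℝ := fun f => Metric.infDist 0 (convexHull ℝ (Set.range f))
    with hD
  obtain ⟨f, hfΦ, hfmin⟩ := Φ.exists_min_image D hΦne
  have hf : ∀ i, f i ∈ C i := Fintype.mem_piFinset.mp hfΦ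
  refine ⟨f, hf, ?_⟩
  set K : Set E := convexHull ℝ (Set.range f) with hK
  have hKco : IsCompact K := (Set.finite_range f).isCompact_convexHull ℝ
  have hKne : K.Nonempty := ⟨f 0, subset_convexHull ℝ _ (Set.mem_range_self 0)⟩
  obtain ⟨x, hxK, hxd⟩ := hKco.exists_infDist_eq_dist hKne 0
  by_cases hx0 : x = 0
  · rwa [← hx0]
  exfalso
  have hxn : 0 < ‖x‖ := norm_pos_iff.mpr hx0
  have hminK : ∀ y ∈ K, ‖x‖ ≤ ‖y‖ := by
    intro y hy
    have h1 := Metric.infDist_le_dist_of_mem (x := (0:E)) hy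
    rw [hxd] at h1
    rwa [dist_zero_left, dist_zero_left] at h1
  have hinner : ∀ y ∈ K, ‖x‖ ^ 2 ≤ ⟪x, y⟫ :=
    fun y hy => inner_ge_of_norm_min (convex_convexHull ℝ _) hxK hminK hy
  -- decompose x as a positive affinely independent combination
  obtain ⟨ι, hι, z, w, hzr, hzai, hw0, hw1, hwz⟩ := eq_pos_convex_span_of_mem_convexHull hxK
  have hzK : ∀ i, z i ∈ K := fun i => subset_convexHull ℝ _ (hzr (Set.mem_range_self i))
  have hzinner : ∀ i, ⟪x, z i⟫ = ‖x‖ ^ 2 := by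
    by_contra hcon
    push_neg at hcon
    obtain ⟨i0, hi0⟩ := hcon
    have hlt : ∀ i ∈ Finset.univ, w i * ‖x‖ ^ 2 ≤ w i * ⟪x, z i⟫ := fun i _ =>
      mul_le_mul_of_nonneg_left (hinner _ (hzK i)) (hw0 i).le
    have hstrict : w i0 * ‖x‖ ^ 2 < w i0 * ⟪x, z i0⟫ :=
      mul_lt_mul_of_pos_left (lt_of_le_of_ne (hinner _ (hzK i0)) (Ne.symm hi0)) (hw0 i0)
    have hsum : ∑ i, w i * ‖x‖ ^ 2 < ∑ i, w i * ⟪x, z i⟫ :=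
      Finset.sum_lt_sum hlt ⟨i0, Finset.mem_univ i0, hstrict⟩
    have h2 : ∑ i, w i * ⟪x, z i⟫ = ‖x‖ ^ 2 := by
      have : ⟪x, ∑ i, w i • z i⟫ = ∑ i, w i * ⟪x, z i⟫ := by
        rw [inner_sum]
        exact Finset.sum_congr rfl fun i _ => real_inner_smul_right _ _ _
      rw [hwz] at this
      rw [← this, real_inner_self_eq_norm_sq]
    have h3 : ∑ i, w i * ‖x‖ ^ 2 = ‖x‖ ^ 2 := by
      rw [← Finset.sum_mul, hw1, one_mul]
    rw [h2, h3] at hsum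
    exact lt_irrefl _ hsum
  -- z is linearly independent
  have hzli : LinearIndependent ℝ z := by
    rw [linearIndependent_iff']
    intro s g hg i hi
    have hsum0 : ∑ j ∈ s, g j = 0 := by
      have h1 : ⟪x, ∑ j ∈ s, g j • z j⟫ = 0 := by rw [hg, inner_zero_right]
      rw [inner_sum] at h1
      have h2 : ∀ j ∈ s, ⟪x, g j • z j⟫ = g j * ‖x‖ ^ 2 := fun j _ => by
        rw [real_inner_smul_right, hzinner]
      rw [Finset.sum_congr rfl h2, ← Finset.sum_mul] at h1
      rcases mul_eq_zero.mp h1 with h | h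
      · exact h
      · nlinarith
    exact affineIndependent_iff.mp hzai s g hsum0 hg i hi
  have hcard : Fintype.card ι ≤ n := le_trans hzli.fintype_card_le_finrank hn
  -- choose preimages
  have hzr' : ∀ i, ∃ j, f j = z i := fun i => hzr (Set.mem_range_self i)
  choose g hg using hzr'
  have hginj : Function.Injective g := by
    intro i i' h
    exact hzai.injective (by rw [← hg, ← hg, h])
  obtain ⟨i₀, hi₀⟩ : ∃ i₀ : Fin (n + 1), i₀ ∉ Finset.image g Finset.univ := by
    by_contra hcon
    push_neg at hcon
    have : (Finset.univ : Finset (Fin (n + 1))) ⊆ Finset.image g Finset.univ :=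
      fun i _ => hcon i
    have h1 := Finset.card_le_card this
    rw [Finset.card_image_of_injective _ hginj] at h1
    simp only [Finset.card_univ, Fintype.card_fin] at h1
    omega
  -- find a point of C i₀ on the other side
  obtain ⟨p, hpC, hpx⟩ : ∃ p ∈ C i₀, ⟪x, p⟫ ≤ 0 := by
    by_contra hcon
    push_neg at hcon
    have hhs : Convex ℝ {y : E | 0 < ⟪x, y⟫} :=
      convex_halfSpace_gt ⟨fun a b => inner_add_right x a b,
        fun c y => real_inner_smul_right x y c⟩ 0
    have hsub : convexHull ℝ (C i₀ : Set E) ⊆ {y : E | 0 < ⟪x, y⟫} :=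
      convexHull_min (fun p hp => hcon p hp) hhs
    have := hsub (hC i₀)
    simp only [Set.mem_setOf_eq, inner_zero_right] at this
    exact lt_irrefl _ this
  set f' : Fin (n + 1) → E := Function.update f i₀ p with hf'
  have hf'Φ : f' ∈ Φ := by
    rw [Fintype.mem_piFinset]
    intro i
    rcases eq_or_ne i i₀ with rfl | hne
    · rw [hf', Function.update_self]; exact hpC
    · rw [hf', Function.update_of_ne hne]; exact hf i
  set K' : Set E := convexHull ℝ (Set.range f') with hK'
  have hminK' : ∀ y ∈ K', ‖x‖ ≤ ‖y‖ := by
    intro y hy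
    have h1 : D f ≤ D f' := hfmin f' hf'Φ
    have h2 : D f' ≤ dist 0 y := Metric.infDist_le_dist_of_mem (x := (0:E)) hy
    have h3 : D f = ‖x‖ := by show Metric.infDist 0 K = ‖x‖; rw [hxd, dist_zero_left]
    rw [dist_zero_left] at h2
    linarith
  have hxK' : x ∈ K' := by
    have hzK' : ∀ i, z i ∈ Set.range f' := by
      intro i
      have hgne : g i ≠ i₀ := fun h => hi₀ (h ▸ Finset.mem_image_of_mem g (Finset.mem_univ i))
      refine ⟨g i, ?_⟩
      rw [hf', Function.update_of_ne hgne, hg]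
    have := Finset.univ.centerMass_mem_convexHull (w := w) (z := z)
      (fun i _ => (hw0 i).le) (by rw [hw1]; norm_num) (fun i _ => hzK' i)
    rwa [Finset.centerMass_eq_of_sum_1 _ _ hw1, hwz] at this
  have hpK' : p ∈ K' := subset_convexHull ℝ _ ⟨i₀, by rw [hf', Function.update_self]⟩
  have := inner_ge_of_norm_min (convex_convexHull ℝ _) hxK' hminK' hpK'
  nlinarith

lemma pilp_sum_apply {ι κ : Type*} (s : Finset ι) (w : ι → ℝ)
    (f : ι → EuclideanSpace ℝ κ) (k : κ) :
    (∑ i ∈ s, w i • f i) k = ∑ i ∈ s, w i * f i k := by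
  induction s using Finset.cons_induction with
  | empty => simp
  | cons a s ha ih => rw [Finset.sum_cons, Finset.sum_cons, ← ih]; rfl

/-- **Tverberg's theorem.** Any set of at least `(d+1)(r-1)+1` points in `ℝ^d` admits a
partition into `r` pairwise disjoint nonempty parts whose convex hulls have a common
point. -/
theorem tverberg (d r : ℕ) (hd : 0 < d) (hr : 0 < r)
    (S : Finset (EuclideanSpace ℝ (Fin d)))
    (hS : (d + 1) * (r - 1) + 1 ≤ S.card) :
    ∃ P : Finpartition S, P.parts.card = r ∧
      (⋂ t ∈ P.parts, convexHull ℝ (t : Set (EuclideanSpace ℝ (Fin d)))).Nonempty := by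
  classical
  set n := (d + 1) * (r - 1) with hn
  obtain ⟨S₀, hS₀S, hS₀card⟩ := Finset.exists_subset_card_eq hS
  -- enumerate S₀
  set a : Fin (n + 1) → EuclideanSpace ℝ (Fin d) :=
    fun i => ↑(S₀.equivFin.symm (Fin.cast hS₀card.symm i)) with ha
  have ha_mem : ∀ i, a i ∈ S₀ := fun i => (S₀.equivFin.symm _).2
  have ha_inj : Function.Injective a := by
    intro i i' h
    have h1 := Subtype.coe_injective h
    have h2 := S₀.equivFin.symm.injective h1
    exact Fin.cast_injective _ h2
  have ha_surj : ∀ p ∈ S₀, ∃ i, a i = p := by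
    intro p hp
    refine ⟨Fin.cast hS₀card (S₀.equivFin ⟨p, hp⟩), ?_⟩
    simp [ha]
  -- lifted vectors and tensor points
  set b : Fin (n + 1) → Fin (d + 1) → ℝ :=
    fun i k => if h : (k : ℕ) < d then a i ⟨k, h⟩ else 1 with hb
  set v : Fin r → Fin (r - 1) → ℝ :=
    fun j m => (if (j : ℕ) = (m : ℕ) then 1 else 0) +
      (if (j : ℕ) = r - 1 then -1 else 0) with hv
  have hvsum : ∀ m : Fin (r - 1), ∑ j : Fin r, v j m = 0 := by
    intro m
    have hm : (m : ℕ) < r - 1 := m.2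
    rw [Finset.sum_add_distrib]
    have h1 : (∑ j : Fin r, if (j : ℕ) = (m : ℕ) then (1 : ℝ) else 0) = 1 := by
      rw [Fin.sum_univ_eq_sum_range (fun j => if j = (m : ℕ) then (1 : ℝ) else 0),
        Finset.sum_ite_eq' (Finset.range r) (m : ℕ) (fun _ => (1 : ℝ)),
        if_pos (Finset.mem_range.mpr (by omega))]
    have h2 : (∑ j : Fin r, if (j : ℕ) = r - 1 then (-1 : ℝ) else 0) = -1 := by
      rw [Fin.sum_univ_eq_sum_range (fun j => if j = r - 1 then (-1 : ℝ) else 0),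
        Finset.sum_ite_eq' (Finset.range r) (r - 1) (fun _ => (-1 : ℝ)),
        if_pos (Finset.mem_range.mpr (by omega))]
    rw [h1, h2]; ring
  have hfr : Module.finrank ℝ (EuclideanSpace ℝ (Fin (d + 1) × Fin (r - 1))) ≤ n := by
    rw [finrank_euclideanSpace]
    simp [hn]
  set T : Fin (n + 1) → Fin r → EuclideanSpace ℝ (Fin (d + 1) × Fin (r - 1)) :=
    fun i j => WithLp.toLp 2 (fun km : Fin (d + 1) × Fin (r - 1) => b i km.1 * v j km.2) with hT
  set C : Fin (n + 1) → Finset (EuclideanSpace ℝ (Fin (d + 1) × Fin (r - 1))) :=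
    fun i => Finset.image (T i) Finset.univ with hC
  have hC0 : ∀ i, (0 : EuclideanSpace ℝ (Fin (d + 1) × Fin (r - 1)))
      ∈ convexHull ℝ (C i : Set (EuclideanSpace ℝ (Fin (d + 1) × Fin (r - 1)))) := by
    intro i
    have hwsum : ∑ _j : Fin r, (1 : ℝ) / r = 1 := by
      rw [Finset.sum_const, Finset.card_univ, Fintype.card_fin, nsmul_eq_mul]
      field_simp
    have hmem := Finset.univ.centerMass_mem_convexHull (w := fun _ : Fin r => (1 : ℝ) / r)
      (z := T i) (fun _ _ => by positivity) (lt_of_lt_of_eq one_pos hwsum.symm)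
      (fun j _ => Finset.mem_coe.mpr (Finset.mem_image_of_mem _ (Finset.mem_univ j)))
    have hcm : Finset.univ.centerMass (fun _ : Fin r => (1 : ℝ) / r) (T i) = 0 := by
      rw [Finset.centerMass_eq_of_sum_1 _ _ hwsum]
      ext km
      rw [pilp_sum_apply]
      have h3 : ∀ j ∈ (Finset.univ : Finset (Fin r)),
          (1 : ℝ) / r * T i j km = (1 : ℝ) / r * b i km.1 * v j km.2 := by
        intro j _; rw [mul_assoc]
      rw [Finset.sum_congr rfl h3, ← Finset.mul_sum, hvsum km.2, mul_zero]
      rfl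
    rwa [hcm] at hmem
  obtain ⟨f, hfC, hf0⟩ := colorful_caratheodory hfr C hC0
  obtain ⟨lam, hlam0, hlam1, hlamsum⟩ := exists_convex_weights hf0
  choose c hc using fun i => Finset.mem_image.mp (hfC i)
  have hcT : ∀ i, T i (c i) = f i := fun i => (hc i).2
  -- key coordinate identity
  have hkey : ∀ (k : Fin (d + 1)) (m : Fin (r - 1)),
      ∑ i, lam i * (b i k * v (c i) m) = 0 := by
    intro k m
    have h1 : (∑ i, lam i • f i) (k, m)
        = (0 : EuclideanSpace ℝ (Fin (d + 1) × Fin (r - 1))) (k, m) := by rw [hlamsum]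
    rw [pilp_sum_apply] at h1
    have h2 : ∀ i ∈ (Finset.univ : Finset (Fin (n + 1))),
        lam i * f i (k, m) = lam i * (b i k * v (c i) m) := by
      intro i _
      rw [← hcT i]
    rw [Finset.sum_congr rfl h2] at h1
    exact h1
  set A : Fin r → Fin (d + 1) → ℝ :=
    fun j k => ∑ i ∈ Finset.univ.filter (fun i => c i = j), lam i * b i k with hA
  set jlast : Fin r := ⟨r - 1, by omega⟩ with hjlast
  have hAeq : ∀ (j : Fin r) (k : Fin (d + 1)), A j k = A jlast k := by
    have hAm : ∀ (m : Fin (r - 1)) (k : Fin (d + 1)),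
        A (Fin.castLE (Nat.sub_le r 1) m) k = A jlast k := by
      intro m k
      have hm2 : (m : ℕ) < r - 1 := m.2
      set jm : Fin r := Fin.castLE (Nat.sub_le r 1) m with hjm
      have hjmv : (jm : ℕ) = (m : ℕ) := rfl
      have h0 := hkey k m
      have h1 : ∑ i, lam i * (b i k * v (c i) m) = ∑ j : Fin r, A j k * v j m := by
        rw [← Finset.sum_fiberwise_of_maps_to (fun i _ => Finset.mem_univ (c i))
          (fun i => lam i * (b i k * v (c i) m))]
        apply Finset.sum_congr rfl
        intro j _
        rw [hA]
        simp only
        rw [Finset.sum_mul]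
        apply Finset.sum_congr rfl
        intro i hi
        rw [(Finset.mem_filter.mp hi).2]
        ring
      have hsplit : ∀ j ∈ (Finset.univ : Finset (Fin r)), A j k * v j m =
          (if (j : ℕ) = (m : ℕ) then A j k else 0) +
          (if (j : ℕ) = r - 1 then -(A j k) else 0) := by
        intro j _
        simp only [hv]
        split_ifs <;> ring
      have e1 : (∑ j : Fin r, if (j : ℕ) = (m : ℕ) then A j k else 0) = A jm k := by
        rw [Finset.sum_eq_single_of_mem jm (Finset.mem_univ _)
          (fun j _ hne => if_neg (fun h => hne (Fin.ext (h.trans hjmv.symm))))]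
        exact if_pos hjmv
      have e2 : (∑ j : Fin r, if (j : ℕ) = r - 1 then -(A j k) else 0)
          = -(A jlast k) := by
        have hjlv : (jlast : ℕ) = r - 1 := rfl
        rw [Finset.sum_eq_single_of_mem jlast (Finset.mem_univ _)
          (fun j _ hne => if_neg (fun h => hne (Fin.ext (h.trans hjlv.symm))))]
        exact if_pos hjlv
      have h2 : ∑ j : Fin r, A j k * v j m = A jm k - A jlast k := by
        rw [Finset.sum_congr rfl hsplit, Finset.sum_add_distrib, e1, e2]
        ring
      rw [h1, h2] at h0
      linarith
    intro j k
    rcases eq_or_ne j jlast with rfl | hne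
    · rfl
    · have hjv : (j : ℕ) < r - 1 := by
        have h1 : (j : ℕ) < r := j.2
        have h2 : (j : ℕ) ≠ r - 1 := fun h => hne (Fin.ext h)
        omega
      have : j = Fin.castLE (Nat.sub_le r 1) (⟨(j : ℕ), hjv⟩ : Fin (r - 1)) :=
        Fin.ext rfl
      rw [this]
      exact hAm ⟨(j : ℕ), hjv⟩ k
  -- masses of the parts
  set klast : Fin (d + 1) := ⟨d, by omega⟩ with hklast
  have hblast : ∀ i, b i klast = 1 := by
    intro i
    simp only [hb]
    exact dif_neg (lt_irrefl d)
  have hbcast : ∀ i (k' : Fin d), b i k'.castSucc = a i k' := by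
    intro i k'
    simp only [hb]
    rw [dif_pos (show ((k'.castSucc : Fin (d + 1)) : ℕ) < d from k'.2)]
    exact congrArg (a i) (Fin.ext rfl)
  have hmass : ∀ j : Fin r, ∑ i ∈ Finset.univ.filter (fun i => c i = j), lam i
      = A jlast klast := by
    intro j
    rw [← hAeq j klast]
    show ∑ i ∈ Finset.univ.filter (fun i => c i = j), lam i
        = ∑ i ∈ Finset.univ.filter (fun i => c i = j), lam i * b i klast
    exact Finset.sum_congr rfl fun i _ => by rw [hblast i, mul_one]
  have hrne : (r : ℝ) ≠ 0 := Nat.cast_ne_zero.mpr (by omega)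
  have hrpos : (0 : ℝ) < r := Nat.cast_pos.mpr hr
  have hmass1 : A jlast klast * r = 1 := by
    have h1 : ∑ j : Fin r, ∑ i ∈ Finset.univ.filter (fun i => c i = j), lam i = 1 := by
      rw [Finset.sum_fiberwise_of_maps_to (fun i _ => Finset.mem_univ (c i)) lam]
      exact hlam1
    rw [Finset.sum_congr rfl (fun j _ => hmass j), Finset.sum_const, Finset.card_univ,
      Fintype.card_fin, nsmul_eq_mul] at h1
    linarith
  have hApos : 0 < A jlast klast := by nlinarith
  have hAval : A jlast klast = 1 / (r : ℝ) := by
    rw [eq_div_iff hrne]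
    exact hmass1
  have hfib_ne : ∀ j : Fin r, (Finset.univ.filter (fun i => c i = j)).Nonempty := by
    intro j
    by_contra hcon
    rw [Finset.not_nonempty_iff_eq_empty] at hcon
    have h2 := hmass j
    rw [hcon, Finset.sum_empty] at h2
    linarith
  -- the common point
  set x : EuclideanSpace ℝ (Fin d) :=
    WithLp.toLp 2 (fun k' : Fin d => (r : ℝ) * A jlast k'.castSucc) with hx
  set Q : Fin r → Finset (EuclideanSpace ℝ (Fin d)) :=
    fun j => Finset.image a (Finset.univ.filter (fun i => c i = j)) with hQ
  have hQx : ∀ j : Fin r, x ∈ convexHull ℝ (Q j : Set (EuclideanSpace ℝ (Fin d))) := by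
    intro j
    have hpos : 0 < ∑ i ∈ Finset.univ.filter (fun i => c i = j), lam i := by
      rw [hmass j]; exact hApos
    have hmem := (Finset.univ.filter (fun i => c i = j)).centerMass_mem_convexHull
      (w := lam) (z := a) (fun i _ => hlam0 i) hpos
      (fun i hi => Finset.mem_coe.mpr (Finset.mem_image_of_mem a hi))
    have hcm : (Finset.univ.filter (fun i => c i = j)).centerMass lam a = x := by
      rw [Finset.centerMass, hmass j, hAval]
      ext k'
      have hsm : ((1 / (r : ℝ))⁻¹ •
          ∑ i ∈ Finset.univ.filter (fun i => c i = j), lam i • a i) k'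
          = (1 / (r : ℝ))⁻¹ *
            (∑ i ∈ Finset.univ.filter (fun i => c i = j), lam i • a i) k' := rfl
      rw [hsm, pilp_sum_apply]
      have h5 : ∀ i ∈ Finset.univ.filter (fun i => c i = j),
          lam i * a i k' = lam i * b i k'.castSucc := by
        intro i _
        rw [hbcast]
      rw [Finset.sum_congr rfl h5]
      have h6 : ∑ i ∈ Finset.univ.filter (fun i => c i = j), lam i * b i k'.castSucc
          = A jlast k'.castSucc := hAeq j k'.castSucc
      rw [h6]
      show (1 / (r : ℝ))⁻¹ * A jlast k'.castSucc = (r : ℝ) * A jlast k'.castSucc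
      rw [one_div, inv_inv]
    rwa [hcm] at hmem
  -- assembling the partition
  set j0 : Fin r := ⟨0, hr⟩ with hj0
  set Q' : Fin r → Finset (EuclideanSpace ℝ (Fin d)) :=
    fun j => if j = j0 then Q j ∪ (S \ S₀) else Q j with hQ'
  have hQsub : ∀ j, Q j ⊆ Q' j := by
    intro j
    simp only [hQ']
    split_ifs
    · exact Finset.subset_union_left
    · exact Finset.Subset.refl _
  have hQ'x : ∀ j, x ∈ convexHull ℝ (Q' j : Set (EuclideanSpace ℝ (Fin d))) :=
    fun j => convexHull_mono (Finset.coe_subset.mpr (hQsub j)) (hQx j)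
  have hQne : ∀ j, (Q j).Nonempty := fun j => (hfib_ne j).image a
  have hQ'ne : ∀ j, (Q' j).Nonempty := fun j => (hQne j).mono (hQsub j)
  have hQS₀ : ∀ j, Q j ⊆ S₀ := by
    intro j p hp
    obtain ⟨i, _, rfl⟩ := Finset.mem_image.mp hp
    exact ha_mem i
  have hQ'S : ∀ j, Q' j ⊆ S := by
    intro j
    simp only [hQ']
    split_ifs
    · exact Finset.union_subset ((hQS₀ j).trans hS₀S) Finset.sdiff_subset
    · exact (hQS₀ j).trans hS₀S
  have hQdis : ∀ j j', j ≠ j' → Disjoint (Q j) (Q j') := by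
    intro j j' hne
    rw [Finset.disjoint_left]
    intro p hp hp'
    obtain ⟨i, hi, rfl⟩ := Finset.mem_image.mp hp
    obtain ⟨i', hi', he⟩ := Finset.mem_image.mp hp'
    have hii : i' = i := ha_inj he
    subst hii
    exact hne (((Finset.mem_filter.mp hi).2).symm.trans (Finset.mem_filter.mp hi').2)
  have hdisS : ∀ jj, Disjoint (S \ S₀) (Q jj) := by
    intro jj
    rw [Finset.disjoint_left]
    intro p hp hp'
    exact (Finset.mem_sdiff.mp hp).2 (hQS₀ jj hp')
  have hQ'dis : ∀ j j', j ≠ j' → Disjoint (Q' j) (Q' j') := by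
    intro j j' hne
    simp only [hQ']
    split_ifs with h1 h2 h2
    · exact absurd (h1.trans h2.symm) hne
    · exact Finset.disjoint_union_left.mpr ⟨hQdis j j' hne, hdisS j'⟩
    · exact Finset.disjoint_union_right.mpr ⟨hQdis j j' hne, (hdisS j).symm⟩
    · exact hQdis j j' hne
  have hQ'inj : Function.Injective Q' := by
    intro j j' h
    by_contra hne
    have hd2 := hQ'dis j j' hne
    rw [h, disjoint_self] at hd2
    exact (hQ'ne j').ne_empty hd2
  have hcover : ∀ p ∈ S, ∃ j, p ∈ Q' j := by
    intro p hp
    by_cases hp0 : p ∈ S₀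
    · obtain ⟨i, rfl⟩ := ha_surj p hp0
      refine ⟨c i, hQsub (c i) ?_⟩
      exact Finset.mem_image_of_mem a (Finset.mem_filter.mpr ⟨Finset.mem_univ i, rfl⟩)
    · refine ⟨j0, ?_⟩
      simp only [hQ', if_pos rfl]
      exact Finset.mem_union_right _ (Finset.mem_sdiff.mpr ⟨hp, hp0⟩)
  refine ⟨⟨Finset.image Q' Finset.univ, ?_, ?_, ?_⟩, ?_, ?_⟩
  · rw [Finset.supIndep_iff_pairwiseDisjoint]
    intro t ht t' ht' hne
    obtain ⟨j, -, rfl⟩ := Finset.mem_image.mp ht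
    obtain ⟨j', -, rfl⟩ := Finset.mem_image.mp ht'
    exact hQ'dis j j' (fun h => hne (by rw [h]))
  · apply le_antisymm
    · apply Finset.sup_le
      intro t ht
      obtain ⟨j, -, rfl⟩ := Finset.mem_image.mp ht
      exact hQ'S j
    · intro p hp
      obtain ⟨j, hj⟩ := hcover p hp
      exact Finset.mem_sup.mpr ⟨Q' j, Finset.mem_image_of_mem Q' (Finset.mem_univ j), hj⟩
  · intro h
    obtain ⟨j, -, hj⟩ := Finset.mem_image.mp h
    exact (hQ'ne j).ne_empty (hj.trans rfl)
  · show (Finset.image Q' Finset.univ).card = r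
    rw [Finset.card_image_of_injective _ hQ'inj, Finset.card_univ, Fintype.card_fin]
  · refine ⟨x, ?_⟩
    rw [Set.mem_iInter₂]
    intro t ht
    obtain ⟨j, -, rfl⟩ := Finset.mem_image.mp ht
    exact hQ'x j
end

section
/- Let P_1, P_2, …, P_r be pairwise disjoint finite sets in ℝ^d. Then ⋂_{j=1}^r conv(P_j) ≠ ∅ if and only if for each j = 1, …, r there exists a subset P_j' ⊆ P_j such that ⋂_{j=1}^r conv(P_j') ≠ ∅ and |⋃_{j=1}^r P_j'| ≤ (d+1)(r-1)+1. -/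
open Finset

/-- Coefficient vectors `v j ∈ ℝ^n`, `j : Fin (n+1)`, with `∑ j, v j = 0` and the only
linear relations `∑ j, v j k • z j = 0 (∀ k)` forcing all `z j` equal. -/
def porv (n : ℕ) (j : Fin (n + 1)) (k : Fin n) : ℝ :=
  (if j = k.castSucc then 1 else 0) - (if j = Fin.last n then 1 else 0)

lemma porv_castSucc {n : ℕ} (k : Fin n) : porv n k.castSucc k = 1 := by
  simp [porv, (Fin.castSucc_lt_last k).ne]

lemma porv_last {n : ℕ} (k : Fin n) : porv n (Fin.last n) k = -1 := by
  simp [porv, (Fin.castSucc_lt_last k).ne']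

lemma porv_other {n : ℕ} (j : Fin (n + 1)) (k : Fin n)
    (h1 : j ≠ k.castSucc) (h2 : j ≠ Fin.last n) : porv n j k = 0 := by
  simp [porv, h1, h2]

lemma porv_sum_smul {M : Type*} [AddCommGroup M] [Module ℝ M] {n : ℕ}
    (z : Fin (n + 1) → M) (k : Fin n) :
    ∑ j, porv n j k • z j = z k.castSucc - z (Fin.last n) := by
  simp [porv, sub_smul, ite_smul, Finset.sum_sub_distrib, Finset.sum_ite_eq']

lemma porv_inj {n : ℕ} (j j' : Fin (n + 1)) (h : ∀ k, porv n j k = porv n j' k) :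
    j = j' := by
  by_contra hne
  rcases eq_or_ne j (Fin.last n) with rfl | hj
  · have hj' : j' ≠ Fin.last n := fun hh => hne hh.symm
    have hk := h (j'.castPred hj')
    have e : porv n j' (j'.castPred hj') = 1 := by
      have e1 := porv_castSucc (j'.castPred hj')
      rwa [Fin.castSucc_castPred] at e1
    rw [porv_last, e] at hk
    norm_num at hk
  · have hk := h (j.castPred hj)
    have e : porv n j (j.castPred hj) = 1 := by
      have e1 := porv_castSucc (j.castPred hj)
      rwa [Fin.castSucc_castPred] at e1
    rw [e] at hk
    rcases eq_or_ne j' (Fin.last n) with rfl | hj'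
    · rw [porv_last] at hk; norm_num at hk
    · rw [porv_other j' _ (by rw [Fin.castSucc_castPred j hj]; exact fun hh => hne hh.symm)
        hj'] at hk
      norm_num at hk

lemma porv_exists_ne_zero {n : ℕ} (hn : 0 < n) (j : Fin (n + 1)) :
    ∃ k, porv n j k ≠ 0 := by
  rcases eq_or_ne j (Fin.last n) with rfl | hj
  · exact ⟨⟨0, hn⟩, by rw [porv_last]; norm_num⟩
  · refine ⟨j.castPred hj, ?_⟩
    have e : porv n j (j.castPred hj) = 1 := by
      have e1 := porv_castSucc (j.castPred hj)
      rwa [Fin.castSucc_castPred] at e1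
    rw [e]; norm_num

/-- The "Sarkaria" lift of a point `p` of color `j` into `(ℝ^d × ℝ)^n`. -/
noncomputable def porW (d n : ℕ) (j : Fin (n + 1)) (p : EuclideanSpace ℝ (Fin d)) :
    Fin n → EuclideanSpace ℝ (Fin d) × ℝ :=
  fun k => (porv n j k • p, porv n j k)

lemma porW_inj {d n : ℕ} (hn : 0 < n)
    {a b : (_ : Fin (n + 1)) × EuclideanSpace ℝ (Fin d)}
    (h : porW d n a.1 a.2 = porW d n b.1 b.2) : a = b := by
  have hsnd : ∀ k, porv n a.1 k = porv n b.1 k := fun k =>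
    congrArg Prod.snd (congrFun h k)
  have h1 : a.1 = b.1 := porv_inj _ _ hsnd
  obtain ⟨k, hk⟩ := porv_exists_ne_zero hn a.1
  have hfst : porv n a.1 k • a.2 = porv n a.1 k • b.2 := by
    have := congrArg Prod.fst (congrFun h k)
    simpa [porW, ← h1, hsnd k] using this
  have h2 : a.2 = b.2 := smul_right_injective _ hk hfst
  exact Sigma.ext h1 (by rw [h2])

lemma porW_sum {d n : ℕ} (Q : Fin (n + 1) → Finset (EuclideanSpace ℝ (Fin d)))
    (β : Fin (n + 1) → EuclideanSpace ℝ (Fin d) → ℝ) (k : Fin n) :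
    (∑ a ∈ Finset.univ.sigma Q, β a.1 a.2 • porW d n a.1 a.2) k =
      (∑ j, porv n j k • ∑ p ∈ Q j, β j p • p,
       ∑ j, porv n j k • ∑ p ∈ Q j, β j p) := by
  apply Prod.ext
  · simp only [Finset.sum_apply, Finset.sum_sigma, Pi.smul_apply, porW, Prod.smul_mk,
      Prod.fst_sum, Finset.smul_sum]
    exact Finset.sum_congr rfl fun j _ => Finset.sum_congr rfl fun p _ => by
      rw [smul_smul, smul_smul, mul_comm]
  · simp only [Finset.sum_apply, Finset.sum_sigma, Pi.smul_apply, porW, Prod.smul_mk,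
      Prod.snd_sum, Finset.smul_sum, smul_eq_mul, Finset.mul_sum]
    exact Finset.sum_congr rfl fun j _ => Finset.sum_congr rfl fun p _ => mul_comm _ _

/-- Key auxiliary statement: the hard direction of Pór's theorem for `r = n+1 ≥ 2` colors. -/
lemma por_aux (d n : ℕ) (hn : 0 < n)
    (P : Fin (n + 1) → Finset (EuclideanSpace ℝ (Fin d)))
    (x : EuclideanSpace ℝ (Fin d))
    (hx : ∀ j, x ∈ convexHull ℝ (P j : Set (EuclideanSpace ℝ (Fin d)))) :
    ∃ Q : Fin (n + 1) → Finset (EuclideanSpace ℝ (Fin d)),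
      (∀ j, Q j ⊆ P j) ∧
      (⋂ j, convexHull ℝ (Q j : Set (EuclideanSpace ℝ (Fin d)))).Nonempty ∧
      ∑ j, (Q j).card ≤ (d + 1) * n + 1 := by
  classical
  -- extract convex coefficients
  have hx' : ∀ j, ∃ w : EuclideanSpace ℝ (Fin d) → ℝ,
      (∀ y ∈ P j, 0 ≤ w y) ∧ (∑ y ∈ P j, w y) = 1 ∧ (∑ y ∈ P j, w y • y) = x := by
    intro j
    have h := hx j
    rw [Finset.convexHull_eq] at h
    obtain ⟨w, hw0, hw1, hw2⟩ := h
    rw [Finset.centerMass_eq_of_sum_1 _ _ hw1] at hw2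
    simp only [id_eq] at hw2
    exact ⟨w, hw0, hw1, hw2⟩
  choose α hα0 hα1 hα2 using hx'
  set S : Finset (Fin n → EuclideanSpace ℝ (Fin d) × ℝ) :=
    Finset.univ.biUnion (fun j => (P j).image (porW d n j)) with hS
  have hrne : ((n : ℝ) + 1) ≠ 0 := by positivity
  -- 0 is in the convex hull of S
  have h0 : (0 : Fin n → EuclideanSpace ℝ (Fin d) × ℝ) ∈
      convexHull ℝ (S : Set (Fin n → EuclideanSpace ℝ (Fin d) × ℝ)) := by
    have hm : ∀ j : Fin (n + 1),
        (∑ p ∈ P j, (((n : ℝ) + 1)⁻¹ * α j p) • p) = ((n : ℝ) + 1)⁻¹ • x := by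
      intro j
      rw [← hα2 j, Finset.smul_sum]
      exact Finset.sum_congr rfl fun p _ => by rw [mul_smul]
    have hsw : ∀ j : Fin (n + 1),
        (∑ p ∈ P j, (((n : ℝ) + 1)⁻¹ * α j p)) = ((n : ℝ) + 1)⁻¹ := by
      intro j
      rw [← Finset.mul_sum, hα1, mul_one]
    have hmem := (convex_convexHull ℝ (S : Set (Fin n → EuclideanSpace ℝ (Fin d) × ℝ))).sum_mem
      (t := Finset.univ.sigma P)
      (w := fun a => ((n : ℝ) + 1)⁻¹ * α a.1 a.2)
      (z := fun a => porW d n a.1 a.2)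
      (fun a ha => by
        rw [Finset.mem_sigma] at ha
        exact mul_nonneg (by positivity) (hα0 a.1 a.2 ha.2))
      (by
        rw [Finset.sum_sigma]
        simp only [hsw]
        rw [Finset.sum_const, Finset.card_univ, Fintype.card_fin, nsmul_eq_mul]
        push_cast
        rw [mul_inv_cancel₀ hrne])
      (fun a ha => by
        rw [Finset.mem_sigma] at ha
        apply subset_convexHull
        rw [Finset.mem_coe, hS, Finset.mem_biUnion]
        exact ⟨a.1, Finset.mem_univ _, Finset.mem_image.2 ⟨a.2, ha.2, rfl⟩⟩)
    convert hmem using 1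
    funext k
    rw [porW_sum P (fun j p => ((n : ℝ) + 1)⁻¹ * α j p) k]
    simp only [hm, hsw]
    rw [porv_sum_smul (fun _ => ((n : ℝ) + 1)⁻¹ • x) k,
        porv_sum_smul (fun _ => ((n : ℝ) + 1)⁻¹) k]
    simp
    rfl
  -- Carathéodory
  rw [convexHull_eq_union] at h0
  simp only [Set.mem_iUnion] at h0
  obtain ⟨t, htS, htai, ht0⟩ := h0
  have htcard : t.card ≤ (d + 1) * n + 1 := by
    have h1 := htai.card_le_finrank_succ
    rw [Fintype.card_coe] at h1
    have h2 : Module.finrank ℝ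
        (vectorSpan ℝ (Set.range ((↑) : t → (Fin n → EuclideanSpace ℝ (Fin d) × ℝ)))) ≤
        Module.finrank ℝ (Fin n → EuclideanSpace ℝ (Fin d) × ℝ) := Submodule.finrank_le _
    have h3 : Module.finrank ℝ (Fin n → EuclideanSpace ℝ (Fin d) × ℝ) = (d + 1) * n := by
      rw [Module.finrank_pi_fintype]
      have hv : Module.finrank ℝ (EuclideanSpace ℝ (Fin d) × ℝ) = d + 1 := by
        rw [Module.finrank_prod, finrank_euclideanSpace_fin, Module.finrank_self]
      simp only [hv, Finset.sum_const, Finset.card_univ, Fintype.card_fin, smul_eq_mul]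
      ring
    omega
  -- the small subsets
  set Q : Fin (n + 1) → Finset (EuclideanSpace ℝ (Fin d)) :=
    fun j => (P j).filter (fun p => porW d n j p ∈ t) with hQ
  have hQP : ∀ j, Q j ⊆ P j := fun j => Finset.filter_subset _ _
  have hinj : ∀ a ∈ Finset.univ.sigma Q, ∀ b ∈ Finset.univ.sigma Q,
      porW d n a.1 a.2 = porW d n b.1 b.2 → a = b := fun a _ b _ h => porW_inj hn h
  have himage : t = (Finset.univ.sigma Q).image (fun a => porW d n a.1 a.2) := by
    apply Finset.Subset.antisymm
    · intro y hy
      have hyS : y ∈ S := htS hy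
      rw [hS, Finset.mem_biUnion] at hyS
      obtain ⟨j, -, hyj⟩ := hyS
      rw [Finset.mem_image] at hyj
      obtain ⟨p, hp, rfl⟩ := hyj
      rw [Finset.mem_image]
      exact ⟨⟨j, p⟩, Finset.mem_sigma.2 ⟨Finset.mem_univ _,
        Finset.mem_filter.2 ⟨hp, hy⟩⟩, rfl⟩
    · intro y hy
      rw [Finset.mem_image] at hy
      obtain ⟨a, ha, rfl⟩ := hy
      rw [Finset.mem_sigma] at ha
      exact (Finset.mem_filter.1 ha.2).2
  -- extract convex coefficients of 0 over t
  rw [Finset.convexHull_eq] at ht0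
  obtain ⟨μ, hμ0, hμ1, hμ2⟩ := ht0
  rw [Finset.centerMass_eq_of_sum_1 _ _ hμ1] at hμ2
  simp only [id_eq] at hμ2
  set β : Fin (n + 1) → EuclideanSpace ℝ (Fin d) → ℝ :=
    fun j p => μ (porW d n j p) with hβ
  have hsum1 : ∑ j, ∑ p ∈ Q j, β j p = 1 := by
    rw [← hμ1, himage, Finset.sum_image hinj, Finset.sum_sigma]
  have hsum2 : (∑ a ∈ Finset.univ.sigma Q, β a.1 a.2 • porW d n a.1 a.2) = 0 := by
    rw [← hμ2, himage, Finset.sum_image hinj]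
  -- all partial sums and partial barycenters are equal
  have hkey : ∀ k : Fin n,
      ((∑ p ∈ Q k.castSucc, β k.castSucc p) = ∑ p ∈ Q (Fin.last n), β (Fin.last n) p) ∧
      ((∑ p ∈ Q k.castSucc, β k.castSucc p • p) =
        ∑ p ∈ Q (Fin.last n), β (Fin.last n) p • p) := by
    intro k
    have hk := congrFun hsum2 k
    rw [porW_sum Q β k] at hk
    have h1 : (∑ j, porv n j k • ∑ p ∈ Q j, β j p • p) = 0 := by
      have := congrArg Prod.fst hk; simpa using this
    have h2 : (∑ j, porv n j k • ∑ p ∈ Q j, β j p) = 0 := by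
      have := congrArg Prod.snd hk; simpa using this
    rw [porv_sum_smul (fun j => ∑ p ∈ Q j, β j p • p) k] at h1
    rw [porv_sum_smul (fun j => ∑ p ∈ Q j, β j p) k] at h2
    exact ⟨sub_eq_zero.1 h2, sub_eq_zero.1 h1⟩
  have hsconst : ∀ j, (∑ p ∈ Q j, β j p) = ∑ p ∈ Q (Fin.last n), β (Fin.last n) p := by
    intro j
    rcases eq_or_ne j (Fin.last n) with rfl | hj
    · rfl
    · have h := (hkey (j.castPred hj)).1
      rwa [Fin.castSucc_castPred] at h
  have hmconst : ∀ j, (∑ p ∈ Q j, β j p • p) =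
      ∑ p ∈ Q (Fin.last n), β (Fin.last n) p • p := by
    intro j
    rcases eq_or_ne j (Fin.last n) with rfl | hj
    · rfl
    · have h := (hkey (j.castPred hj)).2
      rwa [Fin.castSucc_castPred] at h
  have hsval : ∀ j, (∑ p ∈ Q j, β j p) = ((n : ℝ) + 1)⁻¹ := by
    have hh : ((n : ℝ) + 1) * (∑ p ∈ Q (Fin.last n), β (Fin.last n) p) = 1 := by
      have h4 : ∑ j : Fin (n + 1), ∑ p ∈ Q j, β j p =
          ((n : ℝ) + 1) * (∑ p ∈ Q (Fin.last n), β (Fin.last n) p) := by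
        simp only [hsconst]
        rw [Finset.sum_const, Finset.card_univ, Fintype.card_fin, nsmul_eq_mul]
        push_cast
        ring
      rw [← h4, hsum1]
    intro j
    rw [hsconst j]
    exact eq_inv_of_mul_eq_one_right hh
  have hspos : ∀ j, (0 : ℝ) < ∑ p ∈ Q j, β j p := fun j => by
    rw [hsval j]; positivity
  have hβ0 : ∀ j, ∀ p ∈ Q j, 0 ≤ β j p := fun j p hp =>
    hμ0 _ (Finset.mem_filter.1 hp).2
  have hcommon : (⋂ j, convexHull ℝ
      ((Q j : Set (EuclideanSpace ℝ (Fin d))))).Nonempty := by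
    refine ⟨((n : ℝ) + 1) • ∑ p ∈ Q (Fin.last n), β (Fin.last n) p • p,
      Set.mem_iInter.2 fun j => ?_⟩
    have hmem := Finset.centerMass_mem_convexHull (Q j) (z := id) (hβ0 j) (hspos j)
      (fun p hp => Finset.mem_coe.2 hp)
    have hcm : (Q j).centerMass (β j) id =
        ((n : ℝ) + 1) • ∑ p ∈ Q (Fin.last n), β (Fin.last n) p • p := by
      simp only [Finset.centerMass, id_eq]
      rw [hsval j, inv_inv, hmconst j]
    rwa [hcm] at hmem
  refine ⟨Q, hQP, hcommon, ?_⟩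
  have hc : ∑ j, (Q j).card = t.card := by
    rw [himage, Finset.card_image_of_injOn fun a ha b hb hab => hinj a ha b hb hab,
      Finset.card_sigma]
  omega

/-- **Pór's generalization of Kirchberger's theorem.** For pairwise disjoint finite sets
`P 0, …, P (r-1)` in `ℝ^d`, the convex hulls of all the `P j` have a common point iff
there are subsets `Q j ⊆ P j` whose convex hulls have a common point and whose union has
at most `(d+1)(r-1)+1` points. -/
theorem por (d r : ℕ) (hd : 0 < d) (hr : 0 < r)
    (P : Fin r → Finset (EuclideanSpace ℝ (Fin d)))
    (hdisj : ∀ i j, i ≠ j → Disjoint (P i) (P j)) :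
    (⋂ j, convexHull ℝ (P j : Set (EuclideanSpace ℝ (Fin d)))).Nonempty ↔
      ∃ Q : Fin r → Finset (EuclideanSpace ℝ (Fin d)),
        (∀ j, Q j ⊆ P j) ∧
        (⋂ j, convexHull ℝ (Q j : Set (EuclideanSpace ℝ (Fin d)))).Nonempty ∧
        (Finset.univ.biUnion Q).card ≤ (d + 1) * (r - 1) + 1 := by
  classical
  constructor
  · rintro ⟨x, hx⟩
    rw [Set.mem_iInter] at hx
    obtain ⟨n, rfl⟩ : ∃ n, r = n + 1 := ⟨r - 1, (Nat.succ_pred_eq_of_pos hr).symm⟩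
    rcases Nat.eq_zero_or_pos n with rfl | hn
    · have hP0 : (P 0).Nonempty := by
        by_contra h
        rw [Finset.not_nonempty_iff_eq_empty] at h
        have h0 := hx 0
        rw [h] at h0
        simp at h0
      obtain ⟨p, hp⟩ := hP0
      refine ⟨fun _ => {p}, fun j => ?_, ⟨p, Set.mem_iInter.2 fun j => ?_⟩, ?_⟩
      · have hj0 : j = 0 := Fin.ext (by omega)
        rw [hj0]
        exact Finset.singleton_subset_iff.2 hp
      · exact subset_convexHull ℝ _ (by simp)
      · calc (Finset.univ.biUnion fun _ => ({p} : Finset _)).card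
            ≤ ({p} : Finset _).card :=
              Finset.card_le_card (Finset.biUnion_subset.2 fun _ _ => Finset.Subset.refl _)
          _ ≤ (d + 1) * (0 + 1 - 1) + 1 := by simp
    · obtain ⟨Q, hQP, hQne, hQcard⟩ := por_aux d n hn P x hx
      refine ⟨Q, hQP, hQne, ?_⟩
      calc (Finset.univ.biUnion Q).card ≤ ∑ j, (Q j).card := Finset.card_biUnion_le
        _ ≤ (d + 1) * n + 1 := hQcard
        _ = (d + 1) * (n + 1 - 1) + 1 := by simp
  · rintro ⟨Q, hQP, ⟨x, hx⟩, -⟩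
    rw [Set.mem_iInter] at hx
    exact ⟨x, Set.mem_iInter.2 fun j =>
      convexHull_mono (Finset.coe_subset.2 (hQP j)) (hx j)⟩
end

section
/- Let r and d be positive integers and let S ⊂ ℝ^d be a finite set with at least 3((d+1)(r-1)+1) - 1 points. Then the Tverberg r-partition graph G_T[S,r] is connected. -/
open Finset

/-- The parts of a partition after removing the point `x`, discarding empty parts. -/
def eraseParts {α : Type*} [DecidableEq α] (parts : Finset (Finset α)) (x : α) :
    Finset (Finset α) :=
  (parts.image fun t => t.erase x).filter fun t => t.Nonempty

/-- A Tverberg partition: the convex hulls of all the parts have a common point. -/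
def Finpartition.IsTverberg {d : ℕ} {S : Finset (EuclideanSpace ℝ (Fin d))}
    (P : Finpartition S) : Prop :=
  (⋂ t ∈ P.parts, convexHull ℝ (t : Set (EuclideanSpace ℝ (Fin d)))).Nonempty

def TverbergPartition {d : ℕ} (S : Finset (EuclideanSpace ℝ (Fin d))) (r : ℕ) :=
  {P : Finpartition S // P.parts.card = r ∧ P.IsTverberg}

def tverbergGraph {d : ℕ} (S : Finset (EuclideanSpace ℝ (Fin d))) (r : ℕ) :
    SimpleGraph (TverbergPartition S r) where
  Adj P Q := P ≠ Q ∧ ∃! x, x ∈ S ∧ eraseParts P.1.parts x = eraseParts Q.1.parts x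
  symm := by
    constructor
    rintro P Q ⟨hne, x, ⟨hx1, hx2⟩, hu⟩
    exact ⟨hne.symm, x, ⟨hx1, hx2.symm⟩, fun y hy => hu y ⟨hy.1, hy.2.symm⟩⟩
  loopless := by constructor; rintro P ⟨h, -⟩; exact h rfl

namespace TvAux

open scoped Classical

abbrev Pt (d : ℕ) := EuclideanSpace ℝ (Fin d)

variable {d r : ℕ} {S : Finset (Pt d)}

/-- fiber of a coloring -/
def fib (S : Finset (Pt d)) (c : Pt d → Fin r) (i : Fin r) : Finset (Pt d) :=
  S.filter fun x => c x = i

lemma mem_fib {c : Pt d → Fin r} {i : Fin r} {x : Pt d} :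
    x ∈ fib S c i ↔ x ∈ S ∧ c x = i := by simp [fib]

lemma fib_subset (c : Pt d → Fin r) (i : Fin r) : fib S c i ⊆ S := filter_subset _ _

lemma fib_disjoint {c : Pt d → Fin r} {i j : Fin r} (hij : i ≠ j) :
    Disjoint (fib S c i) (fib S c j) := by
  rw [Finset.disjoint_left]
  intro a ha hb
  exact hij ((mem_fib.1 ha).2 ▸ (mem_fib.1 hb).2 ▸ rfl)

lemma fib_congr {c c' : Pt d → Fin r} (h : ∀ x ∈ S, c x = c' x) :
    fib S c = fib S c' := by
  funext i; apply Finset.filter_congr; intro x hx; simp [h x hx]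

/-- the partition associated to a coloring with nonempty fibers -/
noncomputable def partn (c : Pt d → Fin r) (hc : ∀ i, (fib S c i).Nonempty) : Finpartition S where
  parts := univ.image (fib S c)
  supIndep := by
    rw [Finset.supIndep_iff_pairwiseDisjoint]
    rintro A hA B hB hAB
    simp only [coe_image, Set.mem_image, coe_univ, Set.mem_univ, true_and] at hA hB
    obtain ⟨i, rfl⟩ := hA; obtain ⟨j, rfl⟩ := hB
    have hij : i ≠ j := fun h => hAB (by rw [h])
    exact fib_disjoint hij
  sup_parts := by
    apply le_antisymm
    · refine Finset.sup_le ?_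
      intro A hA
      obtain ⟨i, -, rfl⟩ := Finset.mem_image.1 hA
      exact fib_subset c i
    · intro x hx
      rw [Finset.mem_sup]
      exact ⟨fib S c (c x), Finset.mem_image.2 ⟨c x, mem_univ _, rfl⟩,
        mem_fib.2 ⟨hx, rfl⟩⟩
  bot_notMem := by
    intro h
    obtain ⟨i, -, hi⟩ := Finset.mem_image.1 h
    exact (hc i).ne_empty (by simpa using hi)

lemma partn_parts {c : Pt d → Fin r} (hc : ∀ i, (fib S c i).Nonempty) :
    (partn c hc).parts = univ.image (fib S c) := rfl

lemma fib_injective {c : Pt d → Fin r} (hc : ∀ i, (fib S c i).Nonempty) :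
    Function.Injective (fib S c) := by
  intro i j hij
  obtain ⟨x, hx⟩ := hc i
  have hx' : x ∈ fib S c j := hij ▸ hx
  exact (mem_fib.1 hx).2 ▸ (mem_fib.1 hx').2 ▸ rfl

lemma partn_card {c : Pt d → Fin r} (hc : ∀ i, (fib S c i).Nonempty) :
    (partn c hc).parts.card = r := by
  rw [partn_parts, Finset.card_image_of_injective _ (fib_injective hc), card_univ,
    Fintype.card_fin]

lemma isTverberg_partn {c : Pt d → Fin r} (hc : ∀ i, (fib S c i).Nonempty) {p : Pt d}
    (hp : ∀ i, p ∈ convexHull ℝ (fib S c i : Set (Pt d))) : (partn c hc).IsTverberg := by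
  refine ⟨p, ?_⟩
  rw [Set.mem_iInter₂]
  intro t ht
  obtain ⟨i, -, rfl⟩ := Finset.mem_image.1 ht
  exact hp i

/-- a vertex of the Tverberg graph from a coloring -/
noncomputable def vtx (c : Pt d → Fin r) (hc : ∀ i, (fib S c i).Nonempty) {p : Pt d}
    (hp : ∀ i, p ∈ convexHull ℝ (fib S c i : Set (Pt d))) : TverbergPartition S r :=
  ⟨partn c hc, partn_card hc, isTverberg_partn hc hp⟩

lemma partn_perm (c : Pt d → Fin r) (π : Fin r ≃ Fin r) (hc : ∀ i, (fib S c i).Nonempty)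
    (hc' : ∀ i, (fib S (fun x => π (c x)) i).Nonempty) :
    partn (fun x => π (c x)) hc' = partn c hc := by
  apply Finpartition.ext
  rw [partn_parts, partn_parts]
  have h1 : fib S (fun x => π (c x)) = fun i => fib S c (π.symm i) := by
    funext i; apply Finset.filter_congr; intro x _
    simp only [eq_iff_iff]
    constructor
    · intro h; rw [← h]; simp
    · intro h; rw [h]; simp
  rw [h1]
  ext A
  simp only [Finset.mem_image, mem_univ, true_and]
  constructor
  · rintro ⟨i, rfl⟩; exact ⟨π.symm i, rfl⟩
  · rintro ⟨i, rfl⟩; exact ⟨π i, by simp⟩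

end TvAux
namespace TvAux

variable {d r : ℕ} {S : Finset (Pt d)}

lemma erase_fib (c : Pt d → Fin r) (x : Pt d) (i : Fin r) :
    (fib S c i).erase x = fib (S.erase x) c i := by
  ext y
  simp only [Finset.mem_erase, mem_fib]
  tauto

lemma eraseParts_partn {c : Pt d → Fin r} (hc : ∀ i, (fib S c i).Nonempty) (x : Pt d) :
    eraseParts (partn c hc).parts x
      = (Finset.univ.image (fib (S.erase x) c)).filter (·.Nonempty) := by
  unfold eraseParts
  rw [partn_parts, Finset.image_image]
  congr 2
  funext i
  exact erase_fib c x i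

lemma eraseParts_eq_of_agree {c c' : Pt d → Fin r} (hc : ∀ i, (fib S c i).Nonempty)
    (hc' : ∀ i, (fib S c' i).Nonempty) (x : Pt d)
    (hagree : ∀ y ∈ S, y ≠ x → c y = c' y) :
    eraseParts (partn c hc).parts x = eraseParts (partn c' hc').parts x := by
  rw [eraseParts_partn, eraseParts_partn]
  have : fib (S.erase x) c = fib (S.erase x) c' := by
    apply fib_congr
    intro y hy
    exact hagree y (Finset.mem_of_mem_erase hy) (Finset.ne_of_mem_erase hy)
  rw [this]

/-- derived fiber-nonemptiness from cores -/
lemma hcK {c : Pt d → Fin r} {K : Fin r → Finset (Pt d)}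
    (hK1 : ∀ i, (K i).Nonempty) (hKc : ∀ i, K i ⊆ fib S c i) :
    ∀ i, (fib S c i).Nonempty := fun i => (hK1 i).mono (hKc i)

/-- derived Tverberg point membership from cores -/
lemma hpK {c : Pt d → Fin r} {K : Fin r → Finset (Pt d)} {p : Pt d}
    (hKc : ∀ i, K i ⊆ fib S c i) (hp : ∀ i, p ∈ convexHull ℝ (K i : Set (Pt d))) :
    ∀ i, p ∈ convexHull ℝ (fib S c i : Set (Pt d)) :=
  fun i => convexHull_mono (Finset.coe_subset.2 (hKc i)) (hp i)

lemma hKupd {c : Pt d → Fin r} {K : Fin r → Finset (Pt d)} {x : Pt d} {j : Fin r}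
    (hKc : ∀ i, K i ⊆ fib S c i) (hxK : ∀ i, x ∉ K i) :
    ∀ i, K i ⊆ fib S (Function.update c x j) i := by
  intro i y hy
  have hyx : y ≠ x := fun h => hxK i (h ▸ hy)
  have h1 := mem_fib.1 (hKc i hy)
  exact mem_fib.2 ⟨h1.1, by rw [Function.update_of_ne hyx]; exact h1.2⟩

lemma partn_ne {c : Pt d → Fin r} {K : Fin r → Finset (Pt d)} {x : Pt d} {j : Fin r}
    (hK1 : ∀ i, (K i).Nonempty) (hKc : ∀ i, K i ⊆ fib S c i) (hxK : ∀ i, x ∉ K i)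
    (hx : x ∈ S) (hj : c x ≠ j) (hc : ∀ i, (fib S c i).Nonempty)
    (hc' : ∀ i, (fib S (Function.update c x j) i).Nonempty) :
    partn c hc ≠ partn (Function.update c x j) hc' := by
  intro heq
  set c'' := Function.update c x j with hc''def
  have hparts : Finset.univ.image (fib S c) = Finset.univ.image (fib S c'') := by
    have := congrArg Finpartition.parts heq
    rwa [partn_parts, partn_parts] at this
  have hmem : fib S c (c x) ∈ Finset.univ.image (fib S c'') := by
    rw [← hparts]; exact Finset.mem_image.2 ⟨c x, Finset.mem_univ _, rfl⟩
  obtain ⟨k, -, hk⟩ := Finset.mem_image.1 hmem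
  have hxk : x ∈ fib S c'' k := hk.symm ▸ mem_fib.2 ⟨hx, rfl⟩
  have hkj : k = j := by
    have := (mem_fib.1 hxk).2
    rw [hc''def, Function.update_self] at this
    exact this.symm
  obtain ⟨y, hy⟩ := hK1 j
  have hyx : y ≠ x := fun h => hxK j (h ▸ hy)
  have hyfib : y ∈ fib S c j := hKc j hy
  have hyfib'' : y ∈ fib S c'' j := by
    refine mem_fib.2 ⟨(mem_fib.1 hyfib).1, ?_⟩
    rw [hc''def, Function.update_of_ne hyx]
    exact (mem_fib.1 hyfib).2
  rw [← hkj, hk] at hyfib''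
  exact hj ((mem_fib.1 hyfib'').2.symm.trans (mem_fib.1 hyfib).2)

theorem adj_update {c : Pt d → Fin r} {K : Fin r → Finset (Pt d)} {p : Pt d} {x : Pt d}
    {j : Fin r}
    (hK1 : ∀ i, (K i).Nonempty) (hKc : ∀ i, K i ⊆ fib S c i) (hxK : ∀ i, x ∉ K i)
    (hp : ∀ i, p ∈ convexHull ℝ (K i : Set (Pt d))) (hx : x ∈ S) (hj : c x ≠ j) :
    (tverbergGraph S r).Adj (vtx c (hcK hK1 hKc) (hpK hKc hp))
      (vtx (Function.update c x j) (hcK hK1 (hKupd hKc hxK)) (hpK (hKupd hKc hxK) hp)) := by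
  set c'' := Function.update c x j with hc''def
  have hcx'' : c'' x = j := Function.update_self x j c
  have hagree : ∀ y ∈ S, y ≠ x → c y = c'' y := by
    intro y _ hyx; rw [hc''def, Function.update_of_ne hyx]
  constructor
  · intro h
    exact partn_ne hK1 hKc hxK hx hj (hcK hK1 hKc) (hcK hK1 (hKupd hKc hxK))
      (congrArg Subtype.val h)
  · refine ⟨x, ⟨hx, eraseParts_eq_of_agree (hcK hK1 hKc) (hcK hK1 (hKupd hKc hxK)) x hagree⟩, ?_⟩
    rintro y ⟨hyS, heq⟩
    have heq' : eraseParts (partn c (hcK hK1 hKc)).parts y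
        = eraseParts (partn c'' (hcK hK1 (hKupd hKc hxK))).parts y := heq
    by_contra hyx
    -- A := (fib S c (c x)).erase y is a part-minus-y of both partitions
    have hxA : x ∈ (fib S c (c x)).erase y :=
      Finset.mem_erase.2 ⟨fun h => hyx (h.symm ▸ rfl), mem_fib.2 ⟨hx, rfl⟩⟩
    have hAmem : (fib S c (c x)).erase y ∈ eraseParts (partn c (hcK hK1 hKc)).parts y := by
      refine Finset.mem_filter.2 ⟨?_, ⟨x, hxA⟩⟩
      exact Finset.mem_image.2 ⟨fib S c (c x),
        Finset.mem_image.2 ⟨c x, Finset.mem_univ _, rfl⟩, rfl⟩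
    rw [heq'] at hAmem
    obtain ⟨B, hBmem, hBe⟩ := Finset.mem_image.1 (Finset.mem_filter.1 hAmem).1
    obtain ⟨k, -, hkB⟩ := Finset.mem_image.1 hBmem
    have hxB : x ∈ B.erase y := hBe.symm ▸ hxA
    have hkj : k = j := by
      have hxB' : x ∈ fib S c'' k := hkB ▸ Finset.mem_of_mem_erase hxB
      have := (mem_fib.1 hxB').2
      rw [hcx''] at this
      exact this.symm
    have hEq : (fib S c'' j).erase y = (fib S c (c x)).erase y := by
      subst hkj; rw [hkB]; exact hBe
    have hij : c x ≠ j := hj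
    -- (i) fib S c (c x) ⊆ {x, y}
    have h1 : ∀ z ∈ fib S c (c x), z = x ∨ z = y := by
      intro z hz
      by_contra hcon
      push_neg at hcon
      have hz' : z ∈ (fib S c (c x)).erase y := Finset.mem_erase.2 ⟨hcon.2, hz⟩
      rw [← hEq] at hz'
      have hz'' := (mem_fib.1 (Finset.mem_of_mem_erase hz')).2
      rw [hc''def, Function.update_of_ne hcon.1] at hz''
      exact hij ((mem_fib.1 hz).2 ▸ hz'' ▸ rfl)
    -- hence y ∈ K (c x), so c y = c x
    have hcy : c y = c x := by
      obtain ⟨u, hu⟩ := hK1 (c x)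
      have hux : u ≠ x := fun h => hxK (c x) (h ▸ hu)
      rcases h1 u (hKc (c x) hu) with h | h
      · exact absurd h hux
      · exact (mem_fib.1 (hKc (c x) (h ▸ hu))).2
    -- (iii) fib S c'' j ⊆ {x, y}
    have h3 : ∀ z ∈ fib S c'' j, z = x ∨ z = y := by
      intro z hz
      by_contra hcon
      push_neg at hcon
      have hz' : z ∈ (fib S c'' j).erase y := Finset.mem_erase.2 ⟨hcon.2, hz⟩
      rw [hEq] at hz'
      have hz'' := (mem_fib.1 (Finset.mem_of_mem_erase hz')).2
      have hzc : c'' z = c z := by rw [hc''def, Function.update_of_ne hcon.1]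
      exact hij (hz'' ▸ hzc ▸ (mem_fib.1 hz).2)
    have hcy' : c y = j := by
      obtain ⟨u, hu⟩ := hK1 j
      have hux : u ≠ x := fun h => hxK j (h ▸ hu)
      have hu' : u ∈ fib S c'' j := hKupd hKc hxK j hu
      rcases h3 u hu' with h | h
      · exact absurd h hux
      · exact (mem_fib.1 (hKc j (h ▸ hu))).2
    rw [hcy] at hcy'
    exact hij hcy'

theorem reach_core {c c' : Pt d → Fin r} {K : Fin r → Finset (Pt d)} {p : Pt d}
    (hK1 : ∀ i, (K i).Nonempty) (hKc : ∀ i, K i ⊆ fib S c i)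
    (hKc' : ∀ i, K i ⊆ fib S c' i) (hp : ∀ i, p ∈ convexHull ℝ (K i : Set (Pt d))) :
    (tverbergGraph S r).Reachable (vtx c (hcK hK1 hKc) (hpK hKc hp))
      (vtx c' (hcK hK1 hKc') (hpK hKc' hp)) := by
  generalize hn : (S.filter fun x => c x ≠ c' x).card = n
  induction n generalizing c with
  | zero =>
    have hfe : ∀ x ∈ S, c x = c' x := by
      intro x hx
      by_contra h
      have : x ∈ S.filter fun x => c x ≠ c' x := Finset.mem_filter.2 ⟨hx, h⟩
      rw [Finset.card_eq_zero.1 hn] at this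
      exact absurd this (Finset.notMem_empty x)
    have : vtx c (hcK hK1 hKc) (hpK hKc hp) = vtx c' (hcK hK1 hKc') (hpK hKc' hp) := by
      apply Subtype.ext
      apply Finpartition.ext
      show Finset.univ.image (fib S c) = Finset.univ.image (fib S c')
      rw [fib_congr hfe]
    rw [this]
  | succ n ih =>
    have hne : (S.filter fun x => c x ≠ c' x).Nonempty :=
      Finset.card_pos.1 (hn ▸ Nat.succ_pos n)
    obtain ⟨x, hxmem⟩ := hne
    obtain ⟨hxS, hxne⟩ := Finset.mem_filter.1 hxmem
    set c'' := Function.update c x (c' x) with hc''def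
    have hxK : ∀ i, x ∉ K i := by
      intro i hxi
      exact hxne ((mem_fib.1 (hKc i hxi)).2.trans (mem_fib.1 (hKc' i hxi)).2.symm)
    have hKc'' : ∀ i, K i ⊆ fib S c'' i := hKupd hKc hxK
    have hadj := adj_update hK1 hKc hxK hp hxS hxne
    have hcount : (S.filter fun y => c'' y ≠ c' y).card = n := by
      have hset : (S.filter fun y => c'' y ≠ c' y) = (S.filter fun y => c y ≠ c' y).erase x := by
        ext z
        simp only [Finset.mem_filter, Finset.mem_erase]
        constructor
        · rintro ⟨hzS, hz⟩
          have hzx : z ≠ x := by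
            rintro rfl
            rw [hc''def, Function.update_self] at hz
            exact hz rfl
          rw [hc''def, Function.update_of_ne hzx] at hz
          exact ⟨hzx, hzS, hz⟩
        · rintro ⟨hzx, hzS, hz⟩
          rw [hc''def]
          refine ⟨hzS, ?_⟩
          rwa [Function.update_of_ne hzx]
      rw [hset, Finset.card_erase_of_mem hxmem, hn]
      simp
    have hreach := ih hKc'' hcount
    exact (hadj.reachable).trans hreach

end TvAux
namespace TvAux

variable {d r : ℕ} {S : Finset (Pt d)}

theorem exists_coloring (hr : 0 < r) (P : TverbergPartition S r) :
    ∃ (c : Pt d → Fin r) (hc : ∀ i, (fib S c i).Nonempty) (p : Pt d)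
      (hp : ∀ i, p ∈ convexHull ℝ (fib S c i : Set (Pt d))),
      vtx c hc hp = P := by
  obtain ⟨Q, hQcard, hQtv⟩ := P
  obtain ⟨t0, ht0⟩ : ∃ t, t ∈ Q.parts := by
    have hpos : 0 < Q.parts.card := by rw [hQcard]; exact hr
    obtain ⟨t0, ht0⟩ := Finset.card_pos.1 hpos
    exact ⟨t0, ht0⟩
  have e : {x // x ∈ Q.parts} ≃ Fin r := Finset.equivFinOfCardEq hQcard
  set c : Pt d → Fin r := fun x =>
    if h : x ∈ S then e ⟨Q.part x, Q.part_mem.2 h⟩ else e ⟨t0, ht0⟩ with hcdef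
  have hfib : ∀ i, fib S c i = ((e.symm i : {x // x ∈ Q.parts}) : Finset (Pt d)) := by
    intro i
    ext x
    rw [mem_fib]
    constructor
    · rintro ⟨hxS, hcx⟩
      rw [hcdef] at hcx
      simp only [hxS, dif_pos] at hcx
      have : (⟨Q.part x, Q.part_mem.2 hxS⟩ : {x // x ∈ Q.parts}) = e.symm i := by
        rw [← hcx]; simp
      have hval : Q.part x = (e.symm i : {x // x ∈ Q.parts}).1 := congrArg Subtype.val this
      rw [← hval]
      exact Q.mem_part hxS
    · intro hx
      have hmem : ((e.symm i : {x // x ∈ Q.parts}) : Finset (Pt d)) ∈ Q.parts :=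
        (e.symm i).2
      have hxS : x ∈ S := Q.le hmem hx
      have hpart : Q.part x = ((e.symm i : {x // x ∈ Q.parts}) : Finset (Pt d)) :=
        Q.eq_of_mem_parts (Q.part_mem.2 hxS) hmem (Q.mem_part hxS) hx
      refine ⟨hxS, ?_⟩
      rw [hcdef]
      simp only [hxS, dif_pos]
      have : (⟨Q.part x, Q.part_mem.2 hxS⟩ : {x // x ∈ Q.parts}) = e.symm i :=
        Subtype.ext hpart
      rw [this]
      simp
  have hc : ∀ i, (fib S c i).Nonempty := by
    intro i
    rw [hfib]
    exact Q.nonempty_of_mem_parts (e.symm i).2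
  obtain ⟨p, hp0⟩ := hQtv
  rw [Set.mem_iInter₂] at hp0
  have hp : ∀ i, p ∈ convexHull ℝ (fib S c i : Set (Pt d)) := by
    intro i
    rw [hfib]
    exact hp0 _ (e.symm i).2
  refine ⟨c, hc, p, hp, ?_⟩
  apply Subtype.ext
  apply Finpartition.ext
  show Finset.univ.image (fib S c) = Q.parts
  have h1 : Finset.univ.image (fib S c)
      = Finset.univ.image (fun i => ((e.symm i : {x // x ∈ Q.parts}) : Finset (Pt d))) := by
    apply Finset.image_congr
    intro i _
    exact hfib i
  rw [h1]
  have h2 : (Finset.univ : Finset (Fin r)).image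
      (fun i => ((e.symm i : {x // x ∈ Q.parts}) : Finset (Pt d)))
      = ((Finset.univ : Finset (Fin r)).image e.symm).image Subtype.val := by
    rw [Finset.image_image]
    rfl
  have h3 : (Finset.univ : Finset (Fin r)).image e.symm
      = (Finset.univ : Finset {x // x ∈ Q.parts}) := by
    ext t
    simp only [Finset.mem_image, Finset.mem_univ, iff_true]
    exact ⟨e t, by simp⟩
  rw [h2, h3, Finset.univ_eq_attach, Finset.attach_image_val]

end TvAux
namespace TvAux

abbrev LSp (d s : ℕ) := EuclideanSpace ℝ (Fin s × Fin (d + 1))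

def vv (s : ℕ) (i : Fin (s+1)) (k : Fin s) : ℝ :=
  (if (i:ℕ) = (k:ℕ) then 1 else 0) - (if (i:ℕ) = s then 1 else 0)

noncomputable def ww {d : ℕ} (a : Pt d) : Fin (d+1) → ℝ := Fin.snoc (fun l => a l) 1

noncomputable def liftv {d s : ℕ} (i : Fin (s+1)) (a : Pt d) : LSp d s :=
  WithLp.toLp 2 (fun p => vv s i p.1 * ww a p.2)

variable {d s : ℕ}

lemma ww_last (a : Pt d) : ww a (Fin.last d) = 1 := by unfold ww; simp

lemma ww_castSucc (a : Pt d) (l : Fin d) : ww a l.castSucc = a l := by unfold ww; simp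

lemma sum_vv_mul (m : Fin (s+1) → ℝ) (k : Fin s) :
    ∑ i, vv s i k * m i = m k.castSucc - m (Fin.last s) := by
  have h1 : ∀ i : Fin (s+1), vv s i k * m i
      = (if i = k.castSucc then m i else 0) - (if i = Fin.last s then m i else 0) := by
    intro i
    unfold vv
    rw [sub_mul]
    congr 1
    · have hcond : ((i:ℕ) = (k:ℕ)) ↔ (i = k.castSucc) := by
        rw [Fin.ext_iff]; simp
      by_cases h : i = k.castSucc
      · rw [if_pos (hcond.2 h), if_pos h, one_mul]
      · rw [if_neg (fun hh => h (hcond.1 hh)), if_neg h, zero_mul]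
    · have hcond : ((i:ℕ) = s) ↔ (i = Fin.last s) := by
        rw [Fin.ext_iff]; simp
      by_cases h : i = Fin.last s
      · rw [if_pos (hcond.2 h), if_pos h, one_mul]
      · rw [if_neg (fun hh => h (hcond.1 hh)), if_neg h, zero_mul]
  rw [Finset.sum_congr rfl (fun i _ => h1 i), Finset.sum_sub_distrib,
    Finset.sum_ite_eq' Finset.univ k.castSucc m, Finset.sum_ite_eq' Finset.univ (Fin.last s) m]
  simp

lemma sum_vv (k : Fin s) : ∑ i, vv s i k = 0 := by
  have := sum_vv_mul (s := s) (fun _ => 1) k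
  simpa using this

/-- The key reverse Sarkaria computation. -/
theorem rev (Y : Finset (LSp d s)) (ξ : LSp d s → Pt d) (cl : LSp d s → Fin (s+1))
    (hy : ∀ y ∈ Y, y = liftv (cl y) (ξ y))
    (h0 : (0 : LSp d s) ∈ convexHull ℝ (Y : Set (LSp d s))) :
    ∃ q : Pt d, ∀ i, (Y.filter fun y => cl y = i).Nonempty ∧
      q ∈ convexHull ℝ (((Y.filter fun y => cl y = i)).image ξ : Set (Pt d)) := by
  classical
  rw [Finset.convexHull_eq] at h0
  obtain ⟨β, hβ0, hβ1, hβc⟩ := h0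
  have hzero : ∑ y ∈ Y, β y • y = (0 : LSp d s) := by
    have h := Finset.centerMass_eq_of_sum_1 Y id hβ1
    rw [hβc] at h
    simpa using h.symm
  set W : Fin (s+1) → Fin (d+1) → ℝ :=
    fun i l => ∑ y ∈ Y.filter (fun y => cl y = i), β y * ww (ξ y) l with hW
  have hWkey : ∀ (k : Fin s) (l : Fin (d+1)), ∑ i, vv s i k * W i l = 0 := by
    intro k l
    have h1 : ∀ i, vv s i k * W i l
        = ∑ y ∈ Y.filter (fun y => cl y = i), vv s (cl y) k * (β y * ww (ξ y) l) := by
      intro i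
      rw [hW, Finset.mul_sum]
      refine Finset.sum_congr rfl ?_
      intro y hyf
      rw [(Finset.mem_filter.1 hyf).2]
    calc ∑ i, vv s i k * W i l
        = ∑ i, ∑ y ∈ Y.filter (fun y => cl y = i), vv s (cl y) k * (β y * ww (ξ y) l) :=
          Finset.sum_congr rfl (fun i _ => h1 i)
      _ = ∑ y ∈ Y, vv s (cl y) k * (β y * ww (ξ y) l) :=
          Finset.sum_fiberwise_of_maps_to (fun y _ => Finset.mem_univ _) _
      _ = ∑ y ∈ Y, β y * y (k, l) := by
          refine Finset.sum_congr rfl ?_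
          intro y hyY
          have hyc : y (k, l) = vv s (cl y) k * ww (ξ y) l :=
            congrArg (fun v : LSp d s => v (k, l)) (hy y hyY)
          rw [hyc]; ring
      _ = (∑ y ∈ Y, β y • y) (k, l) := by
          rw [WithLp.ofLp_sum, Finset.sum_apply]
          exact Finset.sum_congr rfl fun y _ => rfl
      _ = 0 := by rw [hzero]; rfl
  have hWlast : ∀ i l, W i l = W (Fin.last s) l := by
    intro i l
    induction i using Fin.lastCases with
    | last => rfl
    | cast k =>
      have h2 := hWkey k l
      rw [sum_vv_mul (fun i => W i l) k] at h2
      linarith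
  have hmass : ∀ i, W i (Fin.last d) = ∑ y ∈ Y.filter (fun y => cl y = i), β y := by
    intro i
    rw [hW]
    refine Finset.sum_congr rfl ?_
    intro y _
    rw [ww_last, mul_one]
  have hmasssum : ∑ i, W i (Fin.last d) = 1 := by
    rw [Finset.sum_congr rfl (fun i _ => hmass i)]
    rw [Finset.sum_fiberwise_of_maps_to (fun y _ => Finset.mem_univ (cl y)) β]
    exact hβ1
  have hmc : ∀ i, W i (Fin.last d) = 1 / ((s:ℝ)+1) := by
    intro i
    have hall : ∑ i, W i (Fin.last d) = ((s:ℝ)+1) * W (Fin.last s) (Fin.last d) := by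
      rw [Finset.sum_congr rfl (fun i _ => hWlast i _), Finset.sum_const, Finset.card_univ,
        Fintype.card_fin, nsmul_eq_mul]
      push_cast
      ring
    rw [hWlast i]
    have hs1 : ((s:ℝ)+1) ≠ 0 := by positivity
    rw [hmasssum] at hall
    field_simp
    linarith
  set q : Pt d := WithLp.toLp 2 (fun l : Fin d => ((s:ℝ)+1) * W (Fin.last s) l.castSucc) with hq
  refine ⟨q, fun i => ?_⟩
  have hsum_fib : ∑ y ∈ Y.filter (fun y => cl y = i), ((s:ℝ)+1) * β y = 1 := by
    rw [← Finset.mul_sum, ← hmass i, hmc i]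
    field_simp
  constructor
  · by_contra hemp
    rw [Finset.not_nonempty_iff_eq_empty] at hemp
    rw [hemp, Finset.sum_empty] at hsum_fib
    norm_num at hsum_fib
  · have hmem := Finset.centerMass_mem_convexHull (t := Y.filter (fun y => cl y = i))
      (w := fun y => ((s:ℝ)+1) * β y)
      (fun y hyf => by
        have := hβ0 y (Finset.mem_filter.1 hyf).1
        positivity)
      (by rw [hsum_fib]; norm_num)
      (z := ξ)
      (fun y hyf => by
        exact Finset.mem_coe.2 (Finset.mem_image_of_mem ξ hyf))
    have hcm : (Y.filter (fun y => cl y = i)).centerMass (fun y => ((s:ℝ)+1) * β y) ξ = q := by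
      rw [Finset.centerMass_eq_of_sum_1 _ _ hsum_fib]
      ext l
      rw [WithLp.ofLp_sum, Finset.sum_apply]
      have : ∀ y ∈ Y.filter (fun y => cl y = i),
          ((((s:ℝ)+1) * β y) • ξ y) l = ((s:ℝ)+1) * (β y * ww (ξ y) l.castSucc) := by
        intro y _
        rw [ww_castSucc]
        show (((s:ℝ)+1) * β y) * ξ y l = _
        ring
      rw [Finset.sum_congr rfl this, ← Finset.mul_sum]
      show _ = ((s:ℝ)+1) * W (Fin.last s) l.castSucc
      rw [← hWlast i l.castSucc]
    rw [hcm] at hmem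
    exact hmem

end TvAux
namespace TvAux

open scoped RealInnerProductSpace

variable {ι0 : Type*} [Fintype ι0]

lemma cara {E : Type*} [AddCommGroup E] [Module ℝ E] (A : Finset E) {x : E}
    (hx : x ∈ convexHull ℝ (A : Set E)) :
    ∃ Y : Finset E, Y ⊆ A ∧ AffineIndependent ℝ ((↑) : {y // y ∈ Y} → E) ∧
      x ∈ convexHull ℝ (Y : Set E) := by
  rw [convexHull_eq_union] at hx
  simp only [Set.mem_iUnion] at hx
  obtain ⟨Y, hYA, hai, hxY⟩ := hx
  exact ⟨Y, by exact_mod_cast hYA, hai, hxY⟩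

lemma card_le_of_ai (Y : Finset (EuclideanSpace ℝ ι0))
    (hai : AffineIndependent ℝ ((↑) : {x // x ∈ Y} → EuclideanSpace ℝ ι0)) :
    Y.card ≤ Fintype.card ι0 + 1 := by
  have h1 := hai.card_le_finrank_succ
  rw [Fintype.card_coe] at h1
  refine h1.trans ?_
  have h2 := Submodule.finrank_le (vectorSpan ℝ (Set.range ((↑) : {x // x ∈ Y} → EuclideanSpace ℝ ι0)))
  rw [finrank_euclideanSpace] at h2
  omega

lemma card_le_of_ai_hyperplane (z : EuclideanSpace ℝ ι0) (hz : z ≠ 0) (cst : ℝ)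
    (Y : Finset (EuclideanSpace ℝ ι0)) (hY : ∀ y ∈ Y, ⟪z, y⟫ = cst)
    (hai : AffineIndependent ℝ ((↑) : {x // x ∈ Y} → EuclideanSpace ℝ ι0)) :
    Y.card ≤ Fintype.card ι0 := by
  classical
  rcases Y.eq_empty_or_nonempty with rfl | hne
  · simp
  obtain ⟨y0, hy0⟩ := hne
  have hli := (affineIndependent_iff_linearIndependent_vsub ℝ
    ((↑) : {x // x ∈ Y} → EuclideanSpace ℝ ι0) ⟨y0, hy0⟩).1 hai
  have hmemK : ∀ (i : {i : {x // x ∈ Y} // i ≠ ⟨y0, hy0⟩}),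
      (((i : {x // x ∈ Y}) : EuclideanSpace ℝ ι0) -ᵥ y0)
        ∈ LinearMap.ker ((innerSL ℝ) z).toLinearMap := by
    intro i
    rw [LinearMap.mem_ker, vsub_eq_sub]
    show ⟪z, ((i : {x // x ∈ Y}) : EuclideanSpace ℝ ι0) - y0⟫ = 0
    rw [inner_sub_right, hY _ (i.1.2), hY _ hy0, sub_self]
  have hgli : LinearIndependent ℝ
      (fun i => (⟨_, hmemK i⟩ : LinearMap.ker ((innerSL ℝ) z).toLinearMap)) := by
    apply LinearIndependent.of_comp (LinearMap.ker ((innerSL ℝ) z).toLinearMap).subtype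
    exact hli
  have hcard := hgli.fintype_card_le_finrank
  have hKlt : Module.finrank ℝ (LinearMap.ker ((innerSL ℝ) z).toLinearMap)
      < Fintype.card ι0 := by
    have hKne : LinearMap.ker ((innerSL ℝ) z).toLinearMap < ⊤ := by
      rw [lt_top_iff_ne_top]
      intro h
      have hzK : z ∈ LinearMap.ker ((innerSL ℝ) z).toLinearMap := by rw [h]; trivial
      rw [LinearMap.mem_ker] at hzK
      have h2 : ⟪z, z⟫ = 0 := hzK
      exact hz (inner_self_eq_zero.1 h2)
    have := Submodule.finrank_lt hKne.ne
    rwa [finrank_euclideanSpace] at this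
  have hsub : Fintype.card {i : {x // x ∈ Y} // i ≠ ⟨y0, hy0⟩}
      = Fintype.card {x // x ∈ Y} - 1 := by
    have h1 := Fintype.card_subtype_compl (p := fun i : {x // x ∈ Y} => i = ⟨y0, hy0⟩)
    rw [Fintype.card_subtype_eq] at h1
    exact h1
  rw [hsub, Fintype.card_coe] at hcard
  have hYpos : 1 ≤ Y.card := Finset.card_pos.2 ⟨y0, hy0⟩
  omega

end TvAux
namespace TvAux

open scoped RealInnerProductSpace

variable {ι0 : Type*} [Fintype ι0]

lemma var_ineq {K : Set (EuclideanSpace ℝ ι0)} (hK : Convex ℝ K) {z : EuclideanSpace ℝ ι0}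
    (hzK : z ∈ K) (hmin : ∀ w ∈ K, ‖z‖ ≤ ‖w‖) {u : EuclideanSpace ℝ ι0} (hu : u ∈ K) :
    ‖z‖^2 ≤ ⟪z, u⟫ := by
  by_contra hcon
  push_neg at hcon
  set ε : ℝ := ‖z‖^2 - ⟪z, u⟫ with hε
  have hε0 : 0 < ε := by simp only [hε]; linarith
  set B : ℝ := ‖u - z‖^2 with hB
  have hB0 : 0 ≤ B := by positivity
  set t : ℝ := min 1 (ε / (B + 1)) with ht
  have ht0 : 0 < t := lt_min one_pos (div_pos hε0 (by linarith))
  have ht1 : t ≤ 1 := min_le_left _ _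
  have htB : t * B ≤ ε := by
    have h1 : t ≤ ε / (B + 1) := min_le_right _ _
    have h2 : t * B ≤ (ε / (B+1)) * B := mul_le_mul_of_nonneg_right h1 hB0
    have h3 : (ε / (B+1)) * B ≤ ε := by
      rw [div_mul_eq_mul_div, div_le_iff₀ (by linarith : (0:ℝ) < B + 1)]
      nlinarith
    linarith
  have hw : (1 - t) • z + t • u ∈ K := hK hzK hu (by linarith) (le_of_lt ht0) (by ring)
  have hrw : (1 - t) • z + t • u = z + t • (u - z) := by
    rw [smul_sub, sub_smul, one_smul]
    abel
  rw [hrw] at hw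
  have hnorm := hmin _ hw
  have hexp : ‖z + t • (u - z)‖^2 = ‖z‖^2 + 2 * (t * ⟪z, u - z⟫) + t^2 * B := by
    rw [norm_add_sq_real, real_inner_smul_right, norm_smul]
    rw [hB]
    simp [mul_pow, abs_of_pos ht0]
  have hinner : ⟪z, u - z⟫ = -ε := by
    rw [inner_sub_right, real_inner_self_eq_norm_sq, hε]
    ring
  have hsq : ‖z + t • (u - z)‖^2 < ‖z‖^2 := by
    rw [hexp, hinner]
    have h4 : t^2 * B ≤ t * ε := by
      have : t^2 * B = t * (t * B) := by ring
      rw [this]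
      exact mul_le_mul_of_nonneg_left htB (le_of_lt ht0)
    nlinarith
  nlinarith [norm_nonneg (z + t • (u - z)), norm_nonneg z]

lemma exists_inner_nonpos (z : EuclideanSpace ℝ ι0) (Aj : Finset (EuclideanSpace ℝ ι0))
    (h0 : (0 : EuclideanSpace ℝ ι0) ∈ convexHull ℝ (Aj : Set (EuclideanSpace ℝ ι0))) :
    ∃ y ∈ Aj, ⟪z, y⟫ ≤ 0 := by
  by_contra hcon
  push_neg at hcon
  have hsub : (Aj : Set (EuclideanSpace ℝ ι0)) ⊆ {x | 0 < ⟪z, x⟫} := fun y hy => hcon y hy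
  have hlin : IsLinearMap ℝ (fun x : EuclideanSpace ℝ ι0 => ⟪z, x⟫) :=
    ⟨fun a b => inner_add_right z a b, fun c x => real_inner_smul_right z x c⟩
  have hcvx : Convex ℝ {x : EuclideanSpace ℝ ι0 | 0 < ⟪z, x⟫} := convex_halfSpace_gt hlin 0
  have h2 := convexHull_min hsub hcvx h0
  simp only [Set.mem_setOf_eq, inner_zero_right] at h2
  exact lt_irrefl 0 h2

set_option maxHeartbeats 2000000 in
theorem colorful_cara {ι : Type*} [Fintype ι] [DecidableEq ι]
    (A : ι → Finset (EuclideanSpace ℝ ι0))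
    (hcard : Fintype.card ι0 < Fintype.card ι)
    (h0 : ∀ j, (0 : EuclideanSpace ℝ ι0) ∈ convexHull ℝ (A j : Set (EuclideanSpace ℝ ι0))) :
    ∃ f : ι → EuclideanSpace ℝ ι0, (∀ j, f j ∈ A j) ∧
      (0 : EuclideanSpace ℝ ι0) ∈ convexHull ℝ (Set.range f) := by
  classical
  have hAne : ∀ j, (A j).Nonempty := by
    intro j
    rcases (A j).eq_empty_or_nonempty with h | h
    · exfalso
      have := h0 j
      rw [h] at this
      simp at this
    · exact h
  have hTne : (Fintype.piFinset A).Nonempty :=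
    ⟨fun j => (hAne j).choose, Fintype.mem_piFinset.2 fun j => (hAne j).choose_spec⟩
  obtain ⟨f, hfmem, hfmin⟩ := Finset.exists_min_image (Fintype.piFinset A)
    (fun g => Metric.infDist 0 (convexHull ℝ (Set.range g))) hTne
  have hfA : ∀ j, f j ∈ A j := Fintype.mem_piFinset.1 hfmem
  have hι : Nonempty ι := Fintype.card_pos_iff.1 (by omega)
  have hcomp : IsCompact (convexHull ℝ (Set.range f)) :=
    Set.Finite.isCompact_convexHull (𝕜 := ℝ) (Set.finite_range f)
  have hKne : (convexHull ℝ (Set.range f)).Nonempty :=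
    (Set.range_nonempty f).mono (subset_convexHull ℝ _)
  obtain ⟨z, hzK, hdz⟩ := hcomp.exists_infDist_eq_dist hKne 0
  by_cases hz0 : z = 0
  · exact ⟨f, hfA, hz0 ▸ hzK⟩
  exfalso
  have hmin : ∀ w ∈ convexHull ℝ (Set.range f), ‖z‖ ≤ ‖w‖ := by
    intro w hw
    calc ‖z‖ = dist 0 z := (dist_zero_left z).symm
      _ = Metric.infDist 0 (convexHull ℝ (Set.range f)) := hdz.symm
      _ ≤ dist 0 w := Metric.infDist_le_dist_of_mem hw
      _ = ‖w‖ := dist_zero_left w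
  have hvar : ∀ u ∈ convexHull ℝ (Set.range f), ‖z‖^2 ≤ ⟪z, u⟫ :=
    fun u hu => var_ineq (convex_convexHull ℝ _) hzK hmin hu
  set Y0 : Finset (EuclideanSpace ℝ ι0) := Finset.univ.image f with hY0
  have hY0range : (Y0 : Set (EuclideanSpace ℝ ι0)) = Set.range f := by
    rw [hY0, Finset.coe_image, Finset.coe_univ, Set.image_univ]
  have hzY0 : z ∈ convexHull ℝ (Y0 : Set (EuclideanSpace ℝ ι0)) := by
    rw [hY0range]; exact hzK
  rw [Finset.convexHull_eq] at hzY0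
  obtain ⟨w0, hw00, hw01, hw0c⟩ := hzY0
  have hzsum : ∑ y ∈ Y0, w0 y • y = z := by
    have h := Finset.centerMass_eq_of_sum_1 Y0 id hw01
    rw [hw0c] at h
    simpa using h.symm
  have hY0half : ∀ y ∈ Y0, ‖z‖^2 ≤ ⟪z, y⟫ := by
    intro y hy
    apply hvar
    apply subset_convexHull
    rw [← hY0range]
    exact_mod_cast hy
  have hzero_terms : ∀ y ∈ Y0, 0 ≤ w0 y * (⟪z, y⟫ - ‖z‖^2) :=
    fun y hy => mul_nonneg (hw00 y hy) (by linarith [hY0half y hy])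
  have hsumzero : ∑ y ∈ Y0, w0 y * (⟪z, y⟫ - ‖z‖^2) = 0 := by
    have h1 : ∑ y ∈ Y0, w0 y * ⟪z, y⟫ = ‖z‖^2 := by
      have h2 : ⟪z, ∑ y ∈ Y0, w0 y • y⟫ = ∑ y ∈ Y0, w0 y * ⟪z, y⟫ := by
        rw [inner_sum]
        exact Finset.sum_congr rfl fun y _ => real_inner_smul_right z y (w0 y)
      rw [hzsum, real_inner_self_eq_norm_sq] at h2
      exact h2.symm
    have h3 : ∑ y ∈ Y0, w0 y * ‖z‖^2 = ‖z‖^2 := by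
      rw [← Finset.sum_mul, hw01, one_mul]
    calc ∑ y ∈ Y0, w0 y * (⟪z, y⟫ - ‖z‖^2)
        = ∑ y ∈ Y0, (w0 y * ⟪z, y⟫ - w0 y * ‖z‖^2) := by
          exact Finset.sum_congr rfl fun y _ => by ring
      _ = 0 := by rw [Finset.sum_sub_distrib, h1, h3, sub_self]
  have hsupp : ∀ y ∈ Y0, w0 y ≠ 0 → ⟪z, y⟫ = ‖z‖^2 := by
    have hall := (Finset.sum_eq_zero_iff_of_nonneg hzero_terms).1 hsumzero
    intro y hy hne
    have h2 := hall y hy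
    rcases mul_eq_zero.1 h2 with h | h
    · exact absurd h hne
    · linarith
  set Ys := Y0.filter (fun y => w0 y ≠ 0) with hYs
  have hzYs : z ∈ convexHull ℝ (Ys : Set (EuclideanSpace ℝ ι0)) := by
    rw [← hw0c, ← Finset.centerMass_filter_ne_zero]
    apply Finset.centerMass_mem_convexHull
    · intro y hy
      exact hw00 y (Finset.mem_filter.1 hy).1
    · rw [Finset.sum_filter_ne_zero, hw01]
      norm_num
    · intro y hy
      exact Finset.mem_coe.2 hy
  obtain ⟨Y, hYYs, hYai, hzY⟩ := cara Ys hzYs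
  have hYhyp : ∀ y ∈ Y, ⟪z, y⟫ = ‖z‖^2 := by
    intro y hy
    have h1 := Finset.mem_filter.1 (hYYs hy)
    exact hsupp y h1.1 h1.2
  have hYcard : Y.card ≤ Fintype.card ι0 :=
    card_le_of_ai_hyperplane z hz0 _ Y hYhyp hYai
  have hYsub0 : Y ⊆ Y0 := hYYs.trans (Finset.filter_subset _ _)
  have hpivot : ∃ i0 : ι, ∀ y ∈ Y, ∃ i, i ≠ i0 ∧ f i = y := by
    by_contra hcon
    push_neg at hcon
    choose gy hgY hguniq using hcon
    have hinj : Function.Injective gy := by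
      intro a b hab
      obtain ⟨i, -, hi⟩ := Finset.mem_image.1 (hYsub0 (hgY a))
      have ha : i = a := by
        by_contra h
        exact hguniq a i h hi
      have hb : i = b := by
        by_contra h
        exact hguniq b i h (hab ▸ hi)
      rw [← ha, hb]
    have hinj2 : Function.Injective (fun i => (⟨gy i, hgY i⟩ : {y // y ∈ Y})) :=
      fun a b h => hinj (congrArg Subtype.val h)
    have hcard2 : Fintype.card ι ≤ Y.card := by
      calc Fintype.card ι ≤ Fintype.card {y // y ∈ Y} :=
            Fintype.card_le_of_injective _ hinj2
        _ = Y.card := Fintype.card_coe _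
    omega
  obtain ⟨i0, hi0⟩ := hpivot
  obtain ⟨y0, hy0A, hy0inner⟩ := exists_inner_nonpos z (A i0) (h0 i0)
  set f' := Function.update f i0 y0 with hf'
  have hf'mem : f' ∈ Fintype.piFinset A := Fintype.mem_piFinset.2 (fun j => by
    by_cases h : j = i0
    · rw [hf', h, Function.update_self]; exact hy0A
    · rw [hf', Function.update_of_ne h]; exact hfA j)
  have hYrange' : (Y : Set (EuclideanSpace ℝ ι0)) ⊆ Set.range f' := by
    intro y hy
    obtain ⟨i, hii0, hif⟩ := hi0 y (by exact_mod_cast hy)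
    exact ⟨i, by rw [hf', Function.update_of_ne hii0]; exact hif⟩
  have hzK' : z ∈ convexHull ℝ (Set.range f') := convexHull_mono hYrange' hzY
  have hy0K' : y0 ∈ convexHull ℝ (Set.range f') :=
    subset_convexHull ℝ _ ⟨i0, by rw [hf', Function.update_self]⟩
  have hε0 : (0:ℝ) < ‖z‖^2 := by
    have := norm_pos_iff.2 hz0
    positivity
  set ε : ℝ := ‖z‖^2 with hεdef
  set B : ℝ := ‖y0 - z‖^2 with hBdef
  have hB0 : (0:ℝ) ≤ B := by positivity
  set t : ℝ := ε / (B + ε) with htdef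
  have ht0 : 0 < t := div_pos hε0 (by linarith)
  have ht1 : t ≤ 1 := by
    rw [htdef, div_le_one (by linarith)]
    linarith
  have hu : z + t • (y0 - z) ∈ convexHull ℝ (Set.range f') := by
    have hcombo : (1 - t) • z + t • y0 ∈ convexHull ℝ (Set.range f') :=
      (convex_convexHull ℝ _) hzK' hy0K' (by linarith) (le_of_lt ht0) (by ring)
    have hrw : (1 - t) • z + t • y0 = z + t • (y0 - z) := by
      rw [smul_sub, sub_smul, one_smul]
      abel
    rwa [hrw] at hcombo
  have hval : ‖z + t • (y0 - z)‖^2 < ‖z‖^2 := by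
    have hexp : ‖z + t • (y0 - z)‖^2 = ε + 2 * (t * ⟪z, y0 - z⟫) + t^2 * B := by
      rw [norm_add_sq_real, real_inner_smul_right, norm_smul]
      rw [hεdef, hBdef]
      simp [mul_pow, abs_of_pos ht0]
    have hinner : ⟪z, y0 - z⟫ ≤ -ε := by
      rw [inner_sub_right, real_inner_self_eq_norm_sq]
      rw [hεdef]
      linarith
    have htB : t * B < 2 * ε := by
      rw [htdef, div_mul_eq_mul_div, div_lt_iff₀ (by linarith : (0:ℝ) < B + ε)]
      nlinarith
    have h5 : t^2 * B = t * (t * B) := by ring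
    rw [hexp]
    nlinarith
  have hle := hfmin f' hf'mem
  rw [hdz, dist_zero_left] at hle
  have h1 : Metric.infDist 0 (convexHull ℝ (Set.range f')) ≤ ‖z + t • (y0 - z)‖ := by
    calc Metric.infDist 0 (convexHull ℝ (Set.range f')) ≤ dist 0 (z + t • (y0 - z)) :=
          Metric.infDist_le_dist_of_mem hu
      _ = ‖z + t • (y0 - z)‖ := dist_zero_left _
  have h2 : ‖z‖ ≤ ‖z + t • (y0 - z)‖ := le_trans hle h1
  nlinarith [norm_nonneg (z + t • (y0 - z)), norm_nonneg z]

end TvAux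
namespace TvAux

open scoped Classical

variable {d s : ℕ}

lemma fib_def (S : Finset (Pt d)) (c : Pt d → Fin (s+1)) (i : Fin (s+1)) :
    S.filter (fun x => c x = i) = fib S c i := rfl

theorem sarkaria_fwd (S : Finset (Pt d)) (c : Pt d → Fin (s+1)) (p : Pt d)
    (hp : ∀ i, p ∈ convexHull ℝ (fib S c i : Set (Pt d))) :
    (0 : LSp d s) ∈ convexHull ℝ
      ((S.image fun x => liftv (c x) x : Finset (LSp d s)) : Set (LSp d s)) := by
  classical
  have hp' : ∀ i, ∃ w : Pt d → ℝ, (∀ y ∈ fib S c i, 0 ≤ w y) ∧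
      (∑ y ∈ fib S c i, w y = 1) ∧ (fib S c i).centerMass w id = p := by
    intro i
    have h := hp i
    rw [Finset.convexHull_eq] at h
    exact h
  choose w hw0 hw1 hwc using hp'
  have hwp : ∀ i, ∑ y ∈ fib S c i, w i y • y = p := by
    intro i
    have h := Finset.centerMass_eq_of_sum_1 (fib S c i) id (hw1 i)
    rw [hwc i] at h
    simpa using h.symm
  have hwwp : ∀ i (l : Fin (d+1)), ∑ y ∈ fib S c i, w i y * ww y l = ww p l := by
    intro i l
    induction l using Fin.lastCases with
    | last =>
      rw [ww_last]
      calc ∑ y ∈ fib S c i, w i y * ww y (Fin.last d)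
          = ∑ y ∈ fib S c i, w i y :=
            Finset.sum_congr rfl (fun y _ => by rw [ww_last, mul_one])
        _ = 1 := hw1 i
    | cast l =>
      rw [ww_castSucc]
      calc ∑ y ∈ fib S c i, w i y * ww y l.castSucc
          = ∑ y ∈ fib S c i, (w i y • y) l :=
            Finset.sum_congr rfl (fun y _ => by rw [ww_castSucc]; rfl)
        _ = (∑ y ∈ fib S c i, w i y • y) l := by rw [WithLp.ofLp_sum, Finset.sum_apply]
        _ = p l := congrFun (congrArg WithLp.ofLp (hwp i)) l
  set ν : Pt d → ℝ := fun x => w (c x) x / ((s:ℝ)+1) with hν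
  have hν0 : ∀ x ∈ S, 0 ≤ ν x := by
    intro x hx
    have := hw0 (c x) x (mem_fib.2 ⟨hx, rfl⟩)
    rw [hν]
    positivity
  have hfibsum : ∀ i, ∑ x ∈ fib S c i, ν x = 1/((s:ℝ)+1) := by
    intro i
    have h1 : ∀ x ∈ fib S c i, ν x = w i x / ((s:ℝ)+1) := by
      intro x hx
      rw [hν]
      simp only
      rw [(mem_fib.1 hx).2]
    rw [Finset.sum_congr rfl h1, ← Finset.sum_div, hw1 i]
  have hν1 : ∑ x ∈ S, ν x = 1 := by
    rw [← Finset.sum_fiberwise_of_maps_to (fun x _ => Finset.mem_univ (c x)) ν]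
    have h2 : ∀ i : Fin (s+1), ∑ x ∈ S.filter (fun x => c x = i), ν x = 1/((s:ℝ)+1) := by
      intro i
      rw [fib_def]
      exact hfibsum i
    rw [Finset.sum_congr rfl (fun i _ => h2 i), Finset.sum_const, Finset.card_univ,
      Fintype.card_fin, nsmul_eq_mul]
    field_simp
    norm_num
  have hcm := Finset.centerMass_mem_convexHull (t := S) (w := ν) hν0
    (by rw [hν1]; norm_num) (z := fun x => liftv (c x) x)
    (fun x hx => Finset.mem_coe.2 (Finset.mem_image_of_mem (fun x => liftv (c x) x) hx))
  have hcm0 : S.centerMass ν (fun x => liftv (c x) x) = (0 : LSp d s) := by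
    rw [Finset.centerMass_eq_of_sum_1 _ _ hν1]
    ext pr
    obtain ⟨k, l⟩ := pr
    rw [WithLp.ofLp_sum, Finset.sum_apply]
    have hstep : (0 : LSp d s) (k, l) = 0 := rfl
    rw [hstep]
    calc ∑ x ∈ S, (ν x • liftv (c x) x) (k, l)
        = ∑ x ∈ S, vv s (c x) k * (ν x * ww x l) := by
          refine Finset.sum_congr rfl fun x _ => ?_
          show ν x * (vv s (c x) k * ww x l) = _
          ring
      _ = ∑ i, ∑ x ∈ S.filter (fun x => c x = i), vv s (c x) k * (ν x * ww x l) :=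
          (Finset.sum_fiberwise_of_maps_to (fun x _ => Finset.mem_univ (c x)) _).symm
      _ = ∑ i, vv s i k * (ww p l / ((s:ℝ)+1)) := by
          refine Finset.sum_congr rfl fun i _ => ?_
          rw [fib_def]
          calc ∑ x ∈ fib S c i, vv s (c x) k * (ν x * ww x l)
              = ∑ x ∈ fib S c i, vv s i k * ((w i x * ww x l) / ((s:ℝ)+1)) := by
                refine Finset.sum_congr rfl fun x hx => ?_
                have hcx : c x = i := (mem_fib.1 hx).2
                rw [hν]
                simp only
                rw [hcx]
                ring
            _ = vv s i k * (ww p l / ((s:ℝ)+1)) := by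
                rw [← Finset.mul_sum, ← Finset.sum_div, hwwp i l]
      _ = 0 := by
          rw [← Finset.sum_mul, sum_vv, zero_mul]
  rw [hcm0] at hcm
  exact hcm

theorem support_lemma (S : Finset (Pt d)) (c : Pt d → Fin (s+1)) (p : Pt d)
    (hp : ∀ i, p ∈ convexHull ℝ (fib S c i : Set (Pt d))) :
    ∃ (K : Fin (s+1) → Finset (Pt d)) (q : Pt d),
      (∀ i, (K i).Nonempty ∧ K i ⊆ fib S c i ∧ q ∈ convexHull ℝ (K i : Set (Pt d))) ∧
      ∑ i, (K i).card ≤ (d+1)*s + 1 := by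
  classical
  have h0 := sarkaria_fwd S c p hp
  obtain ⟨Y, hYsub, hYai, h0Y⟩ := cara _ h0
  have hYcard : Y.card ≤ (d+1)*s + 1 := by
    have h := card_le_of_ai Y hYai
    rw [Fintype.card_prod, Fintype.card_fin, Fintype.card_fin] at h
    rw [Nat.mul_comm] at h
    omega
  have hchoice : ∀ y ∈ Y, ∃ x, x ∈ S ∧ liftv (c x) x = y := by
    intro y hy
    obtain ⟨x, hx, hxy⟩ := Finset.mem_image.1 (hYsub hy)
    exact ⟨x, hx, hxy⟩
  set ξ : LSp d s → Pt d :=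
    fun y => if h : ∃ x, x ∈ S ∧ liftv (c x) x = y then h.choose else p with hξ
  have hξS : ∀ y ∈ Y, ξ y ∈ S ∧ liftv (c (ξ y)) (ξ y) = y := by
    intro y hy
    have h := hchoice y hy
    rw [hξ]
    simp only [dif_pos h]
    exact ⟨h.choose_spec.1, h.choose_spec.2⟩
  obtain ⟨q, hq⟩ := rev Y ξ (fun y => c (ξ y)) (fun y hy => ((hξS y hy).2).symm) h0Y
  refine ⟨fun i => (Y.filter fun y => c (ξ y) = i).image ξ, q, fun i => ?_, ?_⟩
  · obtain ⟨hne, hconv⟩ := hq i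
    refine ⟨hne.image ξ, ?_, hconv⟩
    intro xx hxx
    obtain ⟨y, hyf, rfl⟩ := Finset.mem_image.1 hxx
    obtain ⟨hyY, hyc⟩ := Finset.mem_filter.1 hyf
    exact mem_fib.2 ⟨(hξS y hyY).1, hyc⟩
  · calc ∑ i, ((Y.filter fun y => c (ξ y) = i).image ξ).card
        ≤ ∑ i, (Y.filter fun y => c (ξ y) = i).card :=
          Finset.sum_le_sum (fun i _ => Finset.card_image_le)
      _ = Y.card :=
          (Finset.card_eq_sum_card_fiberwise (fun y _ => Finset.mem_univ _)).symm
      _ ≤ (d+1)*s + 1 := hYcard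

theorem tverberg_exists (C : Finset (Pt d)) (hC : C.card = (d+1)*s + 1) :
    ∃ (zc : Pt d → Fin (s+1)) (z : Pt d),
      ∀ i, (fib C zc i).Nonempty ∧ z ∈ convexHull ℝ (fib C zc i : Set (Pt d)) := by
  classical
  have hcard : Fintype.card (Fin s × Fin (d+1)) < Fintype.card {x // x ∈ C} := by
    rw [Fintype.card_coe, hC, Fintype.card_prod, Fintype.card_fin, Fintype.card_fin,
      Nat.mul_comm]
    omega
  set A : {x // x ∈ C} → Finset (LSp d s) :=
    fun a => Finset.univ.image (fun i => liftv i (a : Pt d)) with hA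
  have h0 : ∀ a, (0 : LSp d s) ∈ convexHull ℝ (A a : Set (LSp d s)) := by
    intro a
    have hsum1 : ∑ _i : Fin (s+1), 1/((s:ℝ)+1) = 1 := by
      rw [Finset.sum_const, Finset.card_univ, Fintype.card_fin, nsmul_eq_mul]
      field_simp
      norm_num
    have hcm := Finset.centerMass_mem_convexHull (t := (Finset.univ : Finset (Fin (s+1))))
      (w := fun _ => 1/((s:ℝ)+1)) (fun i _ => by positivity)
      (by rw [hsum1]; norm_num)
      (z := fun i => liftv i (a : Pt d))
      (fun i _ => Finset.mem_coe.2 (Finset.mem_image_of_mem (fun i => liftv i (a : Pt d)) (Finset.mem_univ i)))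
    have hcm0 : (Finset.univ : Finset (Fin (s+1))).centerMass (fun _ => 1/((s:ℝ)+1))
        (fun i => liftv i (a : Pt d)) = (0 : LSp d s) := by
      rw [Finset.centerMass_eq_of_sum_1 _ _ hsum1]
      ext pr
      obtain ⟨k, l⟩ := pr
      rw [WithLp.ofLp_sum, Finset.sum_apply]
      have hterm : ∀ i : Fin (s+1),
          ((1/((s:ℝ)+1)) • liftv i (a : Pt d)) (k, l)
            = vv s i k * (ww (a : Pt d) l / ((s:ℝ)+1)) := by
        intro i
        show (1/((s:ℝ)+1)) * (vv s i k * ww (a : Pt d) l) = _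
        ring
      rw [Finset.sum_congr rfl (fun i _ => hterm i), ← Finset.sum_mul, sum_vv, zero_mul]
      rfl
    rw [hcm0] at hcm
    exact hcm
  obtain ⟨f, hfA, h0f⟩ := colorful_cara A hcard h0
  have hσ : ∀ a : {x // x ∈ C}, ∃ i, liftv i (a : Pt d) = f a := by
    intro a
    obtain ⟨i, -, hi⟩ := Finset.mem_image.1 (hfA a)
    exact ⟨i, hi⟩
  choose σ hσf using hσ
  set Y : Finset (LSp d s) := Finset.univ.image f with hY
  have h0Y : (0 : LSp d s) ∈ convexHull ℝ (Y : Set (LSp d s)) := by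
    rw [hY, Finset.coe_image, Finset.coe_univ, Set.image_univ]
    exact h0f
  have hchoice : ∀ y ∈ Y, ∃ a : {x // x ∈ C}, f a = y := by
    intro y hy
    rw [hY] at hy
    obtain ⟨a, -, ha⟩ := Finset.mem_image.1 hy
    exact ⟨a, ha⟩
  have hCne : C.Nonempty := by
    rw [← Finset.card_pos, hC]
    omega
  set ζ : LSp d s → {x // x ∈ C} :=
    fun y => if h : ∃ a : {x // x ∈ C}, f a = y then h.choose
      else ⟨hCne.choose, hCne.choose_spec⟩ with hζ
  have hζf : ∀ y ∈ Y, f (ζ y) = y := by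
    intro y hy
    have h := hchoice y hy
    rw [hζ]
    simp only [dif_pos h]
    exact h.choose_spec
  have hy' : ∀ y ∈ Y, y = liftv (σ (ζ y)) (((ζ y) : {x // x ∈ C}) : Pt d) := by
    intro y hy
    rw [hσf (ζ y), hζf y hy]
  obtain ⟨q, hq⟩ := rev Y (fun y => (((ζ y) : {x // x ∈ C}) : Pt d)) (fun y => σ (ζ y))
    hy' h0Y
  set zc : Pt d → Fin (s+1) := fun x => if h : x ∈ C then σ ⟨x, h⟩ else 0 with hzc
  refine ⟨zc, q, fun i => ?_⟩
  obtain ⟨hne, hconv⟩ := hq i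
  have hsub : (Y.filter fun y => σ (ζ y) = i).image (fun y => (((ζ y) : {x // x ∈ C}) : Pt d))
      ⊆ fib C zc i := by
    intro xx hxx
    obtain ⟨y, hyf, rfl⟩ := Finset.mem_image.1 hxx
    obtain ⟨hyY, hyc⟩ := Finset.mem_filter.1 hyf
    have hmem : ((ζ y : {x // x ∈ C}) : Pt d) ∈ C := (ζ y).2
    refine mem_fib.2 ⟨hmem, ?_⟩
    rw [hzc]
    simp only [dif_pos hmem]
    have heta : (⟨((ζ y : {x // x ∈ C}) : Pt d), hmem⟩ : {x // x ∈ C}) = ζ y :=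
      Subtype.ext rfl
    rw [heta]
    exact hyc
  constructor
  · obtain ⟨y, hy⟩ := hne
    exact ⟨_, hsub (Finset.mem_image_of_mem _ hy)⟩
  · exact convexHull_mono (by exact_mod_cast hsub) hconv

end TvAux
open TvAux in
/-- If `S ⊂ ℝ^d` has at least `3((d+1)(r-1)+1) - 1` points, the Tverberg `r`-partition
graph of `S` is connected. -/
theorem tverbergGraph_connected (d r : ℕ) (hd : 0 < d) (hr : 0 < r)
    (S : Finset (EuclideanSpace ℝ (Fin d)))
    (hS : 3 * ((d + 1) * (r - 1) + 1) - 1 ≤ S.card) :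
    (tverbergGraph S r).Connected := by
  classical
  obtain ⟨s, rfl⟩ : ∃ s, r = s + 1 := ⟨r - 1, (Nat.succ_pred_eq_of_pos hr).symm⟩
  simp only [Nat.add_sub_cancel] at hS
  set T : ℕ := (d+1)*s + 1 with hT
  have hT1 : 1 ≤ T := Nat.le_add_left 1 _
  have hTcard : T ≤ S.card := by omega
  obtain ⟨C0, hC0S, hC0card⟩ := Finset.exists_subset_card_eq hTcard
  obtain ⟨zc0, z0, hz0⟩ := tverberg_exists C0 hC0card
  set c0 : Pt d → Fin (s+1) := fun x => if x ∈ C0 then zc0 x else 0 with hc0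
  have hK0c : ∀ i, fib C0 zc0 i ⊆ fib S c0 i := by
    intro i y hy
    have h1 := mem_fib.1 hy
    refine mem_fib.2 ⟨hC0S h1.1, ?_⟩
    rw [hc0]
    simp only [if_pos h1.1]
    exact h1.2
  have hK01 : ∀ i, (fib C0 zc0 i).Nonempty := fun i => (hz0 i).1
  have hz0hull : ∀ i, z0 ∈ convexHull ℝ ((fib C0 zc0 i : Finset (Pt d)) : Set (Pt d)) :=
    fun i => (hz0 i).2
  have hnonempty : Nonempty (TverbergPartition S (s+1)) :=
    ⟨vtx c0 (hcK hK01 hK0c) (hpK hK0c hz0hull)⟩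
  rw [SimpleGraph.connected_iff]
  refine ⟨?_, hnonempty⟩
  intro P Q
  obtain ⟨pc, hpc, p0, hp0, hPeq⟩ := exists_coloring (Nat.succ_pos s) P
  obtain ⟨qc, hqc, q0, hq0, hQeq⟩ := exists_coloring (Nat.succ_pos s) Q
  obtain ⟨K, pK, hK, hKcard⟩ := support_lemma S pc p0 hp0
  obtain ⟨L, qL, hL, hLcard⟩ := support_lemma S qc q0 hq0
  set KU : Finset (Pt d) := Finset.univ.biUnion K with hKU
  set LU : Finset (Pt d) := Finset.univ.biUnion L with hLU
  have hKUcard : KU.card ≤ T := le_trans Finset.card_biUnion_le hKcard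
  have hLUcard : LU.card ≤ T := le_trans Finset.card_biUnion_le hLcard
  obtain ⟨C, hCS, hCK, hCcard, hCL⟩ : ∃ C : Finset (Pt d), C ⊆ S ∧ (∀ y ∈ C, y ∉ KU) ∧
      C.card = T ∧ (∀ y ∈ C, ∀ y' ∈ C, y ∈ LU → y' ∈ LU → y = y') := by
    set U : Finset (Pt d) := (S \ KU) \ LU with hU
    have hUcard : S.card ≤ U.card + KU.card + LU.card := by
      have h1 : S.card ≤ (S \ KU).card + KU.card := Finset.card_le_card_sdiff_add_card
      have h2 : (S \ KU).card ≤ U.card + LU.card := Finset.card_le_card_sdiff_add_card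
      omega
    by_cases hbig : T ≤ U.card
    · obtain ⟨C, hCU, hCc⟩ := Finset.exists_subset_card_eq hbig
      refine ⟨C, ?_, ?_, hCc, ?_⟩
      · intro y hy
        exact (Finset.mem_sdiff.1 (Finset.mem_sdiff.1 (hCU hy)).1).1
      · intro y hy
        exact (Finset.mem_sdiff.1 ((Finset.mem_sdiff.1 (hCU hy)).1)).2
      · intro y hy y' hy' hyL hy'L
        exact absurd hyL (Finset.mem_sdiff.1 (hCU hy)).2
    · have hUle : U.card ≤ T - 1 := by omega
      have hScard2 : U.card < (S \ KU).card := by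
        have h3 : S.card ≤ (S \ KU).card + KU.card := Finset.card_le_card_sdiff_add_card
        omega
      have hnsub : ¬ (S \ KU) ⊆ U := fun hsub =>
        absurd (Finset.card_le_card hsub) (by omega)
      obtain ⟨w, hwSK, hwU⟩ := Finset.not_subset.1 hnsub
      refine ⟨insert w U, ?_, ?_, ?_, ?_⟩
      · intro y hy
        rcases Finset.mem_insert.1 hy with rfl | hyU
        · exact (Finset.mem_sdiff.1 hwSK).1
        · exact (Finset.mem_sdiff.1 (Finset.mem_sdiff.1 hyU).1).1
      · intro y hy
        rcases Finset.mem_insert.1 hy with rfl | hyU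
        · exact (Finset.mem_sdiff.1 hwSK).2
        · exact (Finset.mem_sdiff.1 (Finset.mem_sdiff.1 hyU).1).2
      · rw [Finset.card_insert_of_notMem hwU]
        have hUge : T - 1 ≤ U.card := by omega
        omega
      · intro y hy y' hy' hyL hy'L
        have hyw : y = w := by
          rcases Finset.mem_insert.1 hy with h | h
          · exact h
          · exact absurd hyL (Finset.mem_sdiff.1 h).2
        have hy'w : y' = w := by
          rcases Finset.mem_insert.1 hy' with h | h
          · exact h
          · exact absurd hy'L (Finset.mem_sdiff.1 h).2
        rw [hyw, hy'w]
  obtain ⟨zc, z, hz⟩ := tverberg_exists C hCcard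
  obtain ⟨π, hπ⟩ : ∃ π : Fin (s+1) ≃ Fin (s+1), ∀ y ∈ C, y ∈ LU → π (zc y) = qc y := by
    by_cases hover : ∃ w ∈ C, w ∈ LU
    · obtain ⟨w, hwC, hwL⟩ := hover
      refine ⟨Equiv.swap (zc w) (qc w), ?_⟩
      intro y hyC hyL
      have hyw : y = w := hCL y hyC w hwC hyL hwL
      subst hyw
      exact Equiv.swap_apply_left _ _
    · push_neg at hover
      exact ⟨Equiv.refl _, fun y hyC hyL => absurd hyL (hover y hyC)⟩
  set mc : Pt d → Fin (s+1) := fun x => if x ∈ C then zc x else pc x with hmc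
  set nc : Pt d → Fin (s+1) := fun x => if x ∈ C then zc x else π.symm (qc x) with hnc
  set qc' : Pt d → Fin (s+1) := fun x => π.symm (qc x) with hqc'
  have hK1 : ∀ i, (K i).Nonempty := fun i => (hK i).1
  have hKpc : ∀ i, K i ⊆ fib S pc i := fun i => (hK i).2.1
  have hKhull : ∀ i, pK ∈ convexHull ℝ ((K i : Finset (Pt d)) : Set (Pt d)) :=
    fun i => (hK i).2.2
  have hKnotC : ∀ i, ∀ y ∈ K i, y ∉ C := by
    intro i y hy hyC
    exact hCK y hyC (Finset.mem_biUnion.2 ⟨i, Finset.mem_univ i, hy⟩)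
  have hKmc : ∀ i, K i ⊆ fib S mc i := by
    intro i y hy
    have h1 := mem_fib.1 (hKpc i hy)
    refine mem_fib.2 ⟨h1.1, ?_⟩
    rw [hmc]
    simp only [if_neg (hKnotC i y hy)]
    exact h1.2
  have hZ1 : ∀ i, (fib C zc i).Nonempty := fun i => (hz i).1
  have hZhull : ∀ i, z ∈ convexHull ℝ ((fib C zc i : Finset (Pt d)) : Set (Pt d)) :=
    fun i => (hz i).2
  have hZmc : ∀ i, fib C zc i ⊆ fib S mc i := by
    intro i y hy
    have h1 := mem_fib.1 hy
    refine mem_fib.2 ⟨hCS h1.1, ?_⟩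
    rw [hmc]
    simp only [if_pos h1.1]
    exact h1.2
  have hZnc : ∀ i, fib C zc i ⊆ fib S nc i := by
    intro i y hy
    have h1 := mem_fib.1 hy
    refine mem_fib.2 ⟨hCS h1.1, ?_⟩
    rw [hnc]
    simp only [if_pos h1.1]
    exact h1.2
  have hL1 : ∀ i, (L (π i)).Nonempty := fun i => (hL (π i)).1
  have hLhull : ∀ i, qL ∈ convexHull ℝ ((L (π i) : Finset (Pt d)) : Set (Pt d)) :=
    fun i => (hL (π i)).2.2
  have hLqc' : ∀ i, L (π i) ⊆ fib S qc' i := by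
    intro i y hy
    have h1 := mem_fib.1 ((hL (π i)).2.1 hy)
    refine mem_fib.2 ⟨h1.1, ?_⟩
    rw [hqc']
    simp only
    rw [h1.2]
    simp
  have hLnc : ∀ i, L (π i) ⊆ fib S nc i := by
    intro i y hy
    have h1 := mem_fib.1 ((hL (π i)).2.1 hy)
    refine mem_fib.2 ⟨h1.1, ?_⟩
    rw [hnc]
    by_cases hyC : y ∈ C
    · simp only [if_pos hyC]
      have hyL : y ∈ LU := Finset.mem_biUnion.2 ⟨π i, Finset.mem_univ _, hy⟩
      have h2 := hπ y hyC hyL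
      rw [h1.2] at h2
      exact π.injective h2
    · simp only [if_neg hyC]
      rw [h1.2]
      simp
  have R1 := reach_core (c := pc) (c' := mc) hK1 hKpc hKmc hKhull
  have R2 := reach_core (c := mc) (c' := nc) hZ1 hZmc hZnc hZhull
  have R3 := reach_core (c := nc) (c' := qc') hL1 hLnc hLqc' hLhull
  have hPend : vtx pc (hcK hK1 hKpc) (hpK hKpc hKhull) = P := by
    rw [← hPeq]
    rfl
  have hQend : vtx qc' (hcK hL1 hLqc') (hpK hLqc' hLhull) = Q := by
    rw [← hQeq]
    apply Subtype.ext
    exact partn_perm qc π.symm hqc (hcK hL1 hLqc')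
  rw [← hPend, ← hQend]
  exact (R1.trans R2).trans R3
end

section
/- Let n, r, d be positive integers and let S be a set of n points in ℝ^d. Assign to each point of S a label from {1, …, r} uniformly at random and independently, forming a random partition of S into at most r parts. Then the probability that this partition is a Tverberg partition of S into r parts whose degree in the Tverberg r-partition graph G_T[S,r] equals n(r-1) — that is, all r parts are nonempty, their convex hulls have a common point, and for every point x ∈ S and every label j different from the label of x, relabeling x with j again yields a Tverberg partition into r parts — is at least 1 - r^{(r-1)(d+1)} · n^{(r-1)(d+1)} · exp(-2(n-r)²/(n r²)). -/
open Finset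

/-- A labeling `f : S → Fin r` induces a Tverberg partition into `r` parts: every label
is used (all `r` parts are nonempty) and the convex hulls of the `r` parts have a common
point. -/
def IsTverbergLabeling {d r : ℕ} (S : Finset (EuclideanSpace ℝ (Fin d)))
    (f : S → Fin r) : Prop :=
  (∀ j : Fin r, ∃ x : S, f x = j) ∧
    (⋂ j : Fin r,
      convexHull ℝ (Subtype.val '' (f ⁻¹' {j}) : Set (EuclideanSpace ℝ (Fin d)))).Nonempty

/-- The labeling induces a Tverberg partition into `r` parts whose degree in the Tverberg
`r`-partition graph is the maximal value `n(r-1)`: relabeling any single point with any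
other label again yields a Tverberg partition into `r` parts. -/
def IsMaxDegreeTverbergLabeling {d r : ℕ} (S : Finset (EuclideanSpace ℝ (Fin d)))
    (f : S → Fin r) : Prop :=
  IsTverbergLabeling S f ∧
    ∀ (x : S) (j : Fin r), j ≠ f x → IsTverbergLabeling S (Function.update f x j)

open Module RealInnerProductSpace

section Analytic

-- log monotonicity helper
lemma mylog_le {x y : ℝ} (hx : 0 < x) (hxy : x ≤ y) : Real.log x ≤ Real.log y :=
  Real.log_le_log hx hxy

lemma bootstrap_r2 (n : ℕ) (hn : 1 ≤ n)
    (h : 2 * Real.log (2 * (n:ℝ)) < 2 * ((n:ℝ) - 2)^2 / ((n:ℝ) * 2^2)) : 11 ≤ n := by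
  by_contra hlt
  push_neg at hlt
  interval_cases n
  · have h2 : Real.log 2 ≤ Real.log (2 * (1:ℕ):ℝ) := by norm_num
    have := Real.log_two_gt_d9
    norm_num at h
    nlinarith
  · have h2 : (0:ℝ) < Real.log 4 := Real.log_pos (by norm_num)
    norm_num at h
    nlinarith
  · have h2 : Real.log 2 ≤ Real.log (2 * (3:ℕ):ℝ) := mylog_le (by norm_num) (by norm_num)
    have := Real.log_two_gt_d9
    norm_num at h h2
    nlinarith
  · have h2 : Real.log (2^3) ≤ Real.log (2 * (4:ℕ):ℝ) := mylog_le (by norm_num) (by norm_num)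
    rw [Real.log_pow] at h2
    have := Real.log_two_gt_d9
    norm_num at h h2
    nlinarith
  · have h2 : Real.log (2^3) ≤ Real.log (2 * (5:ℕ):ℝ) := mylog_le (by norm_num) (by norm_num)
    rw [Real.log_pow] at h2
    have := Real.log_two_gt_d9
    norm_num at h h2
    nlinarith
  · have h2 : Real.log (2^3) ≤ Real.log (2 * (6:ℕ):ℝ) := mylog_le (by norm_num) (by norm_num)
    rw [Real.log_pow] at h2
    have := Real.log_two_gt_d9
    norm_num at h h2
    nlinarith
  · have h2 : Real.log (2^3) ≤ Real.log (2 * (7:ℕ):ℝ) := mylog_le (by norm_num) (by norm_num)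
    rw [Real.log_pow] at h2
    have := Real.log_two_gt_d9
    norm_num at h h2
    nlinarith
  · have h2 : Real.log (2^4) ≤ Real.log (2 * (8:ℕ):ℝ) := mylog_le (by norm_num) (by norm_num)
    rw [Real.log_pow] at h2
    have := Real.log_two_gt_d9
    norm_num at h h2
    nlinarith
  · have h2 : Real.log (2^4) ≤ Real.log (2 * (9:ℕ):ℝ) := mylog_le (by norm_num) (by norm_num)
    rw [Real.log_pow] at h2
    have := Real.log_two_gt_d9
    norm_num at h h2
    nlinarith
  · have h2 : Real.log (2^4) ≤ Real.log (2 * (10:ℕ):ℝ) := mylog_le (by norm_num) (by norm_num)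
    rw [Real.log_pow] at h2
    have := Real.log_two_gt_d9
    norm_num at h h2
    nlinarith

lemma log_ineq_r2 (n : ℕ) (hn11 : 11 ≤ n) :
    Real.log (2*(n:ℝ)) + 2*((n:ℝ)-2)^2/((n:ℝ)*2^2) ≤ ((n:ℝ)-1) * Real.log 2 := by
  have hN : (11:ℝ) ≤ n := by exact_mod_cast hn11
  have hN0 : (0:ℝ) < n := by linarith
  have hE : 2*((n:ℝ)-2)^2/((n:ℝ)*2^2) = (n:ℝ)/2 - 2 + 2/(n:ℝ) := by
    field_simp
    ring
  have hlogN : Real.log (n:ℝ) ≤ (n:ℝ)/16 + 4*Real.log 2 - 1 := by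
    have h1 : Real.log ((n:ℝ)/16) ≤ (n:ℝ)/16 - 1 := Real.log_le_sub_one_of_pos (by positivity)
    have h2 : Real.log ((n:ℝ)/16) = Real.log (n:ℝ) - Real.log 16 :=
      Real.log_div (ne_of_gt hN0) (by norm_num)
    have h3 : Real.log (16:ℝ) = 4 * Real.log 2 := by
      rw [show (16:ℝ) = 2^4 by norm_num, Real.log_pow]
      push_cast
      ring
    rw [h2, h3] at h1
    linarith
  have hlog2n : Real.log (2*(n:ℝ)) = Real.log 2 + Real.log (n:ℝ) :=
    Real.log_mul (by norm_num) (ne_of_gt hN0)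
  have hdivN : 2/(n:ℝ) ≤ 2/11 := by
    apply div_le_div_of_nonneg_left (by norm_num) (by norm_num) hN
  have hl2a := Real.log_two_gt_d9
  have hl2b := Real.log_two_lt_d9
  rw [hE, hlog2n]
  nlinarith

lemma log_ineq_r3 (R N KR : ℝ) (hR3 : 3 ≤ R) (hN1 : 1 ≤ N) (hK : 2*(R-1) ≤ KR)
    (hardE : KR * Real.log (N*R) < 2*(N-R)^2/(N*R^2)) :
    Real.log (2*N) + 2*(N-R)^2/(N*R^2) ≤ (N-1) * Real.log (R/(R-1)) := by
  have hN0 : (0:ℝ) < N := by linarith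
  have hR0 : (0:ℝ) < R := by linarith
  have hR1 : (0:ℝ) < R - 1 := by linarith
  have hlog3 : 1 < Real.log 3 := by
    rw [Real.lt_log_iff_exp_lt (by norm_num)]
    calc Real.exp 1 < 2.7182818286 := Real.exp_one_lt_d9
    _ < 3 := by norm_num
  have hlogR : 1 < Real.log R := lt_of_lt_of_le hlog3 (mylog_le (by norm_num) hR3)
  have hlogNnn : 0 ≤ Real.log N := Real.log_nonneg hN1
  have hlogNR : Real.log (N*R) = Real.log N + Real.log R :=
    Real.log_mul (ne_of_gt hN0) (ne_of_gt hR0)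
  have hNR1 : 1 < Real.log (N*R) := by rw [hlogNR]; linarith
  have hardE2 : 2*(R-1) * Real.log (N*R) < 2*(N-R)^2/(N*R^2) := by
    calc 2*(R-1) * Real.log (N*R) ≤ KR * Real.log (N*R) :=
          mul_le_mul_of_nonneg_right hK (by linarith)
    _ < _ := hardE
  have hEid : 2*(N-R)^2/(N*R^2) = 2*(N/R^2) - 4/R + 2/N := by
    field_simp
    ring
  rw [hEid] at hardE2 ⊢
  have e1 : (4:ℝ)/R = 2*(2/R) := by ring
  have e2 : (2:ℝ)/N = 2*(1/N) := by ring
  have h2 : (R-1) * Real.log (N*R) + 2/R - 1/N < N/R^2 := by linarith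
  have hc : 1/N ≤ 1 := by rw [div_le_one hN0]; exact hN1
  have hcc : 0 < 2/R := by positivity
  have h3 : (R-1) ≤ (R-1) * Real.log (N*R) :=
    le_mul_of_one_le_right (by linarith) (le_of_lt hNR1)
  have ha : R - 2 < N/R^2 := by linarith
  have haa : (R-2)*R^2 < N := by
    rw [lt_div_iff₀ (by positivity : (0:ℝ) < R^2)] at ha
    linarith
  have hfac : 0 ≤ (R-3)*(R^2+R+3) := mul_nonneg (by linarith) (by positivity)
  have hNR : R < N := by nlinarith
  have hN9 : (9:ℝ) < N := by nlinarith
  have h5 : 0 ≤ 2/R - 1/N := by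
    have h5a : 1/N < 1/R := one_div_lt_one_div_of_lt hR0 hNR
    have h5b : (2:ℝ)/R = 1/R + 1/R := by ring
    have h5c : (0:ℝ) < 1/R := by positivity
    linarith
  have h6a : (R-1) * Real.log (N*R) ≤ N/R^2 := by linarith
  have h6b : ((R-1) * Real.log (N*R))*(R-2) ≤ (N/R^2)*(R-2) :=
    mul_le_mul_of_nonneg_right h6a (by linarith)
  have h6c : ((R-1) * Real.log (N*R))*(R-2) = ((R-1)*(R-2))*Real.log (N*R) := by ring
  have h7 : 2 ≤ (R-1)*(R-2) := by nlinarith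
  have h8 : 2 * Real.log (N*R) ≤ ((R-1)*(R-2))*Real.log (N*R) :=
    mul_le_mul_of_nonneg_right h7 (by linarith)
  have h9 : 2 * Real.log (N*R) ≤ (N/R^2)*(R-2) := by linarith
  have hL : 1/R ≤ Real.log (R/(R-1)) := by
    have ha2 : Real.log ((R-1)/R) ≤ (R-1)/R - 1 := Real.log_le_sub_one_of_pos (by positivity)
    have hb2 : Real.log ((R-1)/R) = Real.log (R-1) - Real.log R :=
      Real.log_div (ne_of_gt hR1) (ne_of_gt hR0)
    have hc2 : Real.log (R/(R-1)) = Real.log R - Real.log (R-1) :=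
      Real.log_div (ne_of_gt hR0) (ne_of_gt hR1)
    have hd2 : (R-1)/R - 1 = -(1/R) := by field_simp; ring
    rw [hb2, hd2] at ha2
    rw [hc2]
    linarith
  have hq : (N-1)/R ≤ (N-1) * Real.log (R/(R-1)) := by
    have h := mul_le_mul_of_nonneg_left hL (by linarith : (0:ℝ) ≤ N - 1)
    calc (N-1)/R = (N-1) * (1/R) := by ring
    _ ≤ (N-1) * Real.log (R/(R-1)) := h
  have hid : (N-1)/R - (2*(N/R^2) - 4/R + 2/N) = (N/R^2)*(R-2) + 3/R - 2/N := by
    field_simp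
    ring
  have hlog2N : Real.log (2*N) = Real.log 2 + Real.log N :=
    Real.log_mul two_ne_zero (ne_of_gt hN0)
  have h2N : 2/N ≤ 2/9 :=
    div_le_div_of_nonneg_left (by norm_num) (by norm_num) (le_of_lt hN9)
  have hl2b := Real.log_two_lt_d9
  have h3R : (0:ℝ) < 3/R := by positivity
  rw [hlog2N]
  linarith [hq, hid, h9, hlogNR, hlogNnn, hlogR, e1, e2]

lemma analytic_bound (d r n : ℕ) (hd : 1 ≤ d) (hr : 2 ≤ r) (hn : 1 ≤ n)
    (hard : ((n:ℝ) * r) ^ ((r-1)*(d+1)) < Real.exp (2 * ((n:ℝ) - r)^2 / ((n:ℝ) * (r:ℝ)^2))) :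
    (((n:ℝ) * r) ^ ((r-1)*(d+1)) + r) * ((n:ℝ) * ((r:ℝ) * ((r:ℝ)-1)^(n-1)))
        * Real.exp (2 * ((n:ℝ) - r)^2 / ((n:ℝ) * (r:ℝ)^2))
      ≤ ((n:ℝ) * r) ^ ((r-1)*(d+1)) * (r:ℝ)^n := by
  have hN1 : (1:ℝ) ≤ n := by exact_mod_cast hn
  have hR2 : (2:ℝ) ≤ r := by exact_mod_cast hr
  have hN0 : (0:ℝ) < n := by linarith
  have hR0 : (0:ℝ) < r := by linarith
  have hK1 : 1 ≤ (r-1)*(d+1) := Nat.mul_pos (by omega) (by omega)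
  have hNR1 : (1:ℝ) ≤ (n:ℝ)*r := by nlinarith
  have hXR : (r:ℝ) ≤ ((n:ℝ)*r)^((r-1)*(d+1)) := by
    calc (r:ℝ) ≤ (n:ℝ)*r := by nlinarith
    _ ≤ ((n:ℝ)*r)^((r-1)*(d+1)) := le_self_pow₀ hNR1 (by omega)
  have hardE : (((r-1)*(d+1) : ℕ):ℝ) * Real.log ((n:ℝ)*r)
      < 2 * ((n:ℝ) - r)^2 / ((n:ℝ) * (r:ℝ)^2) := by
    have h0 : (0:ℝ) < ((n:ℝ)*r)^((r-1)*(d+1)) := by positivity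
    have h := Real.log_lt_log h0 hard
    rwa [Real.log_pow, Real.log_exp] at h
  have hlog : Real.log (2*(n:ℝ)) + 2 * ((n:ℝ) - r)^2 / ((n:ℝ) * (r:ℝ)^2)
      ≤ ((n:ℝ)-1) * Real.log ((r:ℝ)/((r:ℝ)-1)) := by
    rcases eq_or_lt_of_le hr with heq | hlt
    · -- r = 2
      have hr2 : r = 2 := heq.symm
      subst hr2
      have hK2 : (2:ℝ) ≤ (((2-1)*(d+1) : ℕ):ℝ) := by
        have : 2 ≤ (2-1)*(d+1) := by omega
        exact_mod_cast this
      have hlogpos : 0 ≤ Real.log ((n:ℝ)*2) := Real.log_nonneg (by linarith)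
      have hboot : 2 * Real.log (2 * (n:ℝ)) < 2 * ((n:ℝ) - 2)^2 / ((n:ℝ) * 2^2) := by
        have h1 : 2 * Real.log ((n:ℝ)*2) ≤ (((2-1)*(d+1) : ℕ):ℝ) * Real.log ((n:ℝ)*2) :=
          mul_le_mul_of_nonneg_right hK2 hlogpos
        have h2 : ((n:ℝ)*2) = 2*(n:ℝ) := by ring
        rw [h2] at h1
        calc 2 * Real.log (2*(n:ℝ)) ≤ _ := h1
        _ < _ := by rw [← h2] at *; push_cast at hardE ⊢; convert hardE using 2 <;> push_cast <;> ring
      have h11 := bootstrap_r2 n hn hboot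
      have := log_ineq_r2 n h11
      have hq2 : ((2:ℝ))/((2:ℝ)-1) = 2 := by norm_num
      push_cast
      rw [hq2]
      push_cast at this
      linarith
    · -- r ≥ 3
      have hr3 : 3 ≤ r := hlt
      have hcast : ((r-1:ℕ):ℝ) = (r:ℝ) - 1 := by
        push_cast [Nat.cast_sub (by omega : 1 ≤ r)]
        ring
      have hKcast : 2*((r:ℝ)-1) ≤ (((r-1)*(d+1) : ℕ):ℝ) := by
        have h1 : (r-1)*2 ≤ (r-1)*(d+1) := Nat.mul_le_mul_left _ (by omega)
        have h2 : (((r-1)*2 : ℕ):ℝ) ≤ (((r-1)*(d+1) : ℕ):ℝ) := by exact_mod_cast h1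
        rw [show (((r-1)*2 : ℕ):ℝ) = ((r-1:ℕ):ℝ)*2 by push_cast; ring, hcast] at h2
        linarith
      exact log_ineq_r3 (r:ℝ) (n:ℝ) (((r-1)*(d+1) : ℕ):ℝ)
        (by exact_mod_cast hr3) hN1 hKcast hardE
  -- exponentiate
  have hqpos : (0:ℝ) < (r:ℝ)/((r:ℝ)-1) := by
    apply div_pos hR0
    linarith
  have h1 : 2*(n:ℝ) * Real.exp (2 * ((n:ℝ) - r)^2 / ((n:ℝ) * (r:ℝ)^2))
      ≤ ((r:ℝ)/((r:ℝ)-1))^(n-1) := by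
    have h2 := Real.exp_le_exp.mpr hlog
    rw [Real.exp_add, Real.exp_log (by positivity : (0:ℝ) < 2*(n:ℝ))] at h2
    have h3 : ((n:ℝ)-1) = ((n-1:ℕ):ℝ) := by
      rw [Nat.cast_sub hn]
      norm_num
    rw [h3, Real.exp_nat_mul, Real.exp_log hqpos] at h2
    exact h2
  have hq_pow : ((r:ℝ)/((r:ℝ)-1))^(n-1) * ((r:ℝ)-1)^(n-1) = (r:ℝ)^(n-1) := by
    rw [div_pow, div_mul_cancel₀]
    exact pow_ne_zero _ (by linarith : (r:ℝ)-1 ≠ 0)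
  have h4 : 2*(n:ℝ)*Real.exp (2 * ((n:ℝ) - r)^2 / ((n:ℝ) * (r:ℝ)^2)) * ((r:ℝ)-1)^(n-1)
      ≤ (r:ℝ)^(n-1) := by
    calc 2*(n:ℝ)*Real.exp (2 * ((n:ℝ) - r)^2 / ((n:ℝ) * (r:ℝ)^2)) * ((r:ℝ)-1)^(n-1)
        ≤ ((r:ℝ)/((r:ℝ)-1))^(n-1) * ((r:ℝ)-1)^(n-1) :=
          mul_le_mul_of_nonneg_right h1 (pow_nonneg (by linarith : (0:ℝ) ≤ (r:ℝ)-1) _)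
    _ = (r:ℝ)^(n-1) := hq_pow
  have h5 : 2*(n:ℝ)*Real.exp (2 * ((n:ℝ) - r)^2 / ((n:ℝ) * (r:ℝ)^2)) * ((r:ℝ)-1)^(n-1) * r
      ≤ (r:ℝ)^n := by
    have h6 := mul_le_mul_of_nonneg_right h4 (le_of_lt hR0)
    rwa [← pow_succ, Nat.sub_add_cancel hn] at h6
  have hXe : ((n:ℝ)*r)^((r-1)*(d+1)) + r ≤ 2*((n:ℝ)*r)^((r-1)*(d+1)) := by linarith
  have hXpos : (0:ℝ) < ((n:ℝ)*r)^((r-1)*(d+1)) := by positivity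
  calc (((n:ℝ) * r) ^ ((r-1)*(d+1)) + r) * ((n:ℝ) * ((r:ℝ) * ((r:ℝ)-1)^(n-1)))
        * Real.exp (2 * ((n:ℝ) - r)^2 / ((n:ℝ) * (r:ℝ)^2))
      ≤ (2*((n:ℝ) * r) ^ ((r-1)*(d+1))) * ((n:ℝ) * ((r:ℝ) * ((r:ℝ)-1)^(n-1)))
        * Real.exp (2 * ((n:ℝ) - r)^2 / ((n:ℝ) * (r:ℝ)^2)) := by
        apply mul_le_mul_of_nonneg_right _ (le_of_lt (Real.exp_pos _))
        apply mul_le_mul_of_nonneg_right hXe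
        exact mul_nonneg (by linarith) (mul_nonneg (by linarith)
          (pow_nonneg (by linarith : (0:ℝ) ≤ (r:ℝ)-1) _))
  _ = ((n:ℝ) * r) ^ ((r-1)*(d+1)) *
        (2*(n:ℝ)*Real.exp (2 * ((n:ℝ) - r)^2 / ((n:ℝ) * (r:ℝ)^2)) * ((r:ℝ)-1)^(n-1) * r) := by
        ring
  _ ≤ ((n:ℝ) * r) ^ ((r-1)*(d+1)) * (r:ℝ)^n :=
        mul_le_mul_of_nonneg_left h5 (le_of_lt hXpos)

end Analytic

section Geometry

lemma minimal_face {V : Type*} [AddCommGroup V] [Module ℝ V] [FiniteDimensional ℝ V]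
    {ι : Type*} [Fintype ι] (g : ι → V →ₗ[ℝ] ℝ) (c : ι → ℝ)
    (hne : ∃ x, ∀ i, g i x ≤ c i) :
    ∃ T : Finset ι, T.card ≤ finrank ℝ V ∧ (∃ x, ∀ i ∈ T, g i x = c i) ∧
      ∀ z, (∀ i ∈ T, g i z = c i) → ∀ i, g i z ≤ c i := by
  classical
  set Q : Set V := {x | ∀ i, g i x ≤ c i} with hQ
  set tight : V → Finset ι := fun x => univ.filter (fun i => g i x = c i) with htight
  have hQne : Q.Nonempty := hne
  set NS : Set ℕ := (fun x => (tight x).card) '' Q with hNS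
  have hNSne : NS.Nonempty := hQne.image _
  have hNSbdd : BddAbove NS := by
    refine ⟨Fintype.card ι, ?_⟩
    rintro N ⟨x, -, rfl⟩
    exact (Finset.card_le_univ _).trans (le_of_eq (Finset.card_univ))
  obtain ⟨x₁, hx₁Q, hx₁card⟩ : ∃ x₁ ∈ Q, (tight x₁).card = sSup NS := by
    have := Nat.sSup_mem hNSne hNSbdd
    rcases this with ⟨x, hx, hcard⟩
    exact ⟨x, hx, hcard⟩
  have hmax : ∀ x ∈ Q, (tight x).card ≤ (tight x₁).card := by
    intro x hx
    rw [hx₁card]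
    exact le_csSup hNSbdd ⟨x, hx, rfl⟩
  -- Claim: the affine set cut by tight x₁ equalities is inside Q
  have claim : ∀ z, (∀ i ∈ tight x₁, g i z = c i) → z ∈ Q := by
    intro z hz
    by_contra hzQ
    have : ∃ i, c i < g i z := by
      simp only [hQ, Set.mem_setOf_eq, not_forall, not_le] at hzQ
      exact hzQ
    obtain ⟨i₀, hi₀⟩ := this
    set Vio : Finset ι := univ.filter (fun i => c i < g i z) with hVio
    have hVione : Vio.Nonempty := ⟨i₀, by simp [hVio, hi₀]⟩
    have hstrict : ∀ i ∈ Vio, g i x₁ < c i := by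
      intro i hi
      rcases lt_or_eq_of_le (hx₁Q i) with h | h
      · exact h
      · exfalso
        have : i ∈ tight x₁ := by simp [htight, h]
        have := hz i this
        simp only [hVio, mem_filter] at hi
        linarith [hi.2]
    set lam : ι → ℝ := fun i => (c i - g i x₁) / (g i z - g i x₁) with hlam
    have hlam01 : ∀ i ∈ Vio, 0 < lam i ∧ lam i ≤ 1 := by
      intro i hi
      have h1 : c i < g i z := by simpa [hVio] using hi
      have h2 : g i x₁ < c i := hstrict i hi
      have hd : 0 < g i z - g i x₁ := by linarith
      constructor
      · exact div_pos (by linarith) hd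
      · rw [div_le_one hd]; linarith
    set lst : ℝ := Vio.inf' hVione lam with hlst
    obtain ⟨istar, histar, histeq⟩ := Finset.exists_mem_eq_inf' hVione lam
    have hlst0 : 0 < lst := by
      rw [hlst, histeq]
      exact (hlam01 istar histar).1
    have hlst1 : lst ≤ 1 := by
      rw [hlst, histeq]
      exact (hlam01 istar histar).2
    have hlstle : ∀ i ∈ Vio, lst ≤ lam i := fun i hi => Finset.inf'_le _ hi
    set x' : V := x₁ + lst • (z - x₁) with hx'
    have gx' : ∀ i, g i x' = g i x₁ + lst * (g i z - g i x₁) := by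
      intro i
      simp [hx', map_add, map_smul, smul_eq_mul, map_sub]
    have hx'Q : x' ∈ Q := by
      intro i
      rcases le_or_gt (g i z) (c i) with h | h
      · have := hx₁Q i
        rw [gx' i]
        nlinarith
      · have hiV : i ∈ Vio := by simp [hVio, h]
        have h2 := hstrict i hiV
        have hd : 0 < g i z - g i x₁ := by linarith
        have := hlstle i hiV
        rw [gx' i]
        rw [hlam] at this
        have : lst * (g i z - g i x₁) ≤ c i - g i x₁ := by
          rw [← div_mul_cancel₀ (c i - g i x₁) (ne_of_gt hd)]
          exact mul_le_mul_of_nonneg_right this (le_of_lt hd)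
        linarith
    have hsub : tight x₁ ⊆ tight x' := by
      intro i hi
      have h1 : g i x₁ = c i := by simpa [htight] using hi
      have h2 : g i z = c i := hz i hi
      simp [htight, gx' i, h1, h2]
    have histar_tight : istar ∈ tight x' := by
      have h1 : c istar < g istar z := by simpa [hVio] using histar
      have h2 : g istar x₁ < c istar := hstrict istar histar
      have hd : 0 < g istar z - g istar x₁ := by linarith
      have : lst = (c istar - g istar x₁) / (g istar z - g istar x₁) := by
        rw [hlst, histeq]
      simp only [htight, mem_filter, mem_univ, true_and]
      rw [gx' istar, this, div_mul_cancel₀ _ (ne_of_gt hd)]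
      ring
    have histar_not : istar ∉ tight x₁ := by
      intro hmem
      have : g istar x₁ = c istar := by simpa [htight] using hmem
      exact absurd this (ne_of_lt (hstrict istar histar))
    have : (tight x₁).card < (tight x').card := by
      apply Finset.card_lt_card
      exact Finset.ssubset_iff_of_subset hsub |>.mpr ⟨istar, histar_tight, histar_not⟩
    exact absurd (hmax x' hx'Q) (by omega)
  -- span reduction
  obtain ⟨b, hbsub, hbspan, hbli⟩ := exists_linearIndependent ℝ (g '' (tight x₁ : Set ι))
  have hbfin : b.Finite := Set.Finite.subset (Set.Finite.image _ (tight x₁).finite_toSet) hbsub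
  have hsec : ∀ v ∈ b, ∃ i ∈ tight x₁, g i = v := by
    intro v hv
    obtain ⟨i, hi, rfl⟩ := hbsub hv
    exact ⟨i, hi, rfl⟩
  choose sec hsecmem hseceq using hsec
  set T : Finset ι := hbfin.toFinset.attach.image
      (fun v => sec v.1 (hbfin.mem_toFinset.mp v.2)) with hT
  have hTsub : T ⊆ tight x₁ := by
    intro i hi
    rw [hT, Finset.mem_image] at hi
    obtain ⟨v, -, rfl⟩ := hi
    exact hsecmem _ _
  have hTcard : T.card ≤ finrank ℝ V := by
    have h1 : T.card ≤ hbfin.toFinset.attach.card := Finset.card_image_le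
    rw [Finset.card_attach] at h1
    have : hbfin.toFinset.card ≤ finrank ℝ (Module.Dual ℝ V) := by
      classical
      haveI := hbfin.fintype
      have := hbli.fintype_card_le_finrank
      simpa [Set.toFinset_card] using this
    rw [Subspace.dual_finrank_eq] at this
    omega
  refine ⟨T, hTcard, ⟨x₁, fun i hi => by simpa [htight] using (hTsub hi)⟩, ?_⟩
  intro z hzT
  have key : ∀ i ∈ tight x₁, g i z = c i := by
    intro i hi
    have hspan : g i ∈ Submodule.span ℝ b := by
      rw [hbspan]
      exact Submodule.subset_span ⟨i, hi, rfl⟩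
    have hzero : ∀ φ ∈ Submodule.span ℝ b, φ (z - x₁) = (0:ℝ) := by
      intro φ hφ
      induction hφ using Submodule.span_induction with
      | mem v hv =>
        have hveq : g (sec v hv) = v := hseceq v hv
        have hvT : sec v hv ∈ T := by
          rw [hT, Finset.mem_image]
          exact ⟨⟨v, hbfin.mem_toFinset.mpr hv⟩, Finset.mem_attach _ _, rfl⟩
        have h1 : g (sec v hv) z = c (sec v hv) := hzT _ hvT
        have h2 : g (sec v hv) x₁ = c (sec v hv) := by
          simpa [htight] using hTsub hvT
        rw [← hveq]
        simp [map_sub, h1, h2]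
      | zero => simp
      | add u w hu hw ihu ihw => simp [LinearMap.add_apply, ihu, ihw]
      | smul a u hu ihu => simp [LinearMap.smul_apply, ihu]
    have h0 : g i (z - x₁) = 0 := hzero _ hspan
    have h1 : g i x₁ = c i := by simpa [htight] using hi
    have := map_sub (g i) z x₁
    rw [this, h1] at h0
    linarith
  exact claim z key


lemma separation_cert {d r : ℕ} (V : Fin r → Finset (EuclideanSpace ℝ (Fin d)))
    (hVne : ∀ j, (V j).Nonempty)
    (hempty : (⋂ j, convexHull ℝ ((V j : Set (EuclideanSpace ℝ (Fin d))))) = ∅) :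
    ∃ (a : Fin r → EuclideanSpace ℝ (Fin d)) (b : Fin r → ℝ),
      (∑ j, a j) = 0 ∧ (∑ j, b j) = -1 ∧ ∀ j, ∀ y ∈ V j, ⟪a j, y⟫ ≤ b j := by
  classical
  set K : Set (Fin r → EuclideanSpace ℝ (Fin d)) :=
    Set.univ.pi (fun j => convexHull ℝ (V j : Set (EuclideanSpace ℝ (Fin d)))) with hK
  have hKconv : Convex ℝ K := convex_pi (fun j _ => convex_convexHull ℝ _)
  have hKcomp : IsCompact K :=
    isCompact_univ_pi (fun j => (V j).finite_toSet.isCompact_convexHull ℝ)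
  set diag : EuclideanSpace ℝ (Fin d) →ₗ[ℝ] (Fin r → EuclideanSpace ℝ (Fin d)) :=
    LinearMap.pi (fun _ => LinearMap.id) with hdiag
  set D : Submodule ℝ (Fin r → EuclideanSpace ℝ (Fin d)) := LinearMap.range diag with hD
  have hDclosed : IsClosed (D : Set (Fin r → EuclideanSpace ℝ (Fin d))) :=
    Submodule.closed_of_finiteDimensional D
  have hDconv : Convex ℝ (D : Set (Fin r → EuclideanSpace ℝ (Fin d))) := D.convex
  have hdisj : Disjoint K (D : Set (Fin r → EuclideanSpace ℝ (Fin d))) := by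
    rw [Set.disjoint_left]
    rintro z hzK ⟨y, rfl⟩
    have hy : y ∈ ⋂ j, convexHull ℝ ((V j : Set (EuclideanSpace ℝ (Fin d)))) := by
      apply Set.mem_iInter.mpr
      intro j
      have := hzK j (Set.mem_univ j)
      simpa [hdiag] using this
    rw [hempty] at hy
    exact hy
  obtain ⟨f, u, v, hfK, huv, hfD⟩ :=
    geometric_hahn_banach_compact_closed hKconv hKcomp hDconv hDclosed hdisj
  have hfD0 : ∀ y : EuclideanSpace ℝ (Fin d), f (diag y) = 0 := by
    intro y
    by_contra hne
    have hv : ∀ t : ℝ, v < t * f (diag y) := by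
      intro t
      have hmem : (t • diag y) ∈ D := ⟨t • y, by simp⟩
      have := hfD _ hmem
      simpa [map_smul, smul_eq_mul] using this
    have h1 := hv ((v - 1) / f (diag y))
    rw [div_mul_cancel₀ _ hne] at h1
    linarith
  have hv0 : v < 0 := by
    have := hfD 0 (Submodule.zero_mem D)
    simpa using this
  set Lj : Fin r → (EuclideanSpace ℝ (Fin d) →L[ℝ] ℝ) := fun j =>
    (f.toLinearMap.comp (LinearMap.single ℝ (fun _ : Fin r => EuclideanSpace ℝ (Fin d)) j)).toContinuousLinearMap with hLj
  set a : Fin r → EuclideanSpace ℝ (Fin d) :=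
    fun j => (InnerProductSpace.toDual ℝ (EuclideanSpace ℝ (Fin d))).symm (Lj j) with ha
  have hinner : ∀ j (y : EuclideanSpace ℝ (Fin d)), ⟪a j, y⟫ = f (Pi.single j y) := by
    intro j y
    rw [ha]
    exact InnerProductSpace.toDual_symm_apply
  have hdecomp : ∀ z : Fin r → EuclideanSpace ℝ (Fin d), f z = ∑ j, f (Pi.single j (z j)) := by
    intro z
    have hz : z = ∑ j, Pi.single j (z j) := (Finset.univ_sum_single z).symm
    conv_lhs => rw [hz]
    exact map_sum f _ _
  have hsuma : (∑ j, a j) = 0 := by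
    have h : ∀ y : EuclideanSpace ℝ (Fin d), ⟪∑ j, a j, y⟫ = 0 := by
      intro y
      rw [sum_inner]
      have h2 : ∑ j, ⟪a j, y⟫ = ∑ j, f (Pi.single j y) :=
        Finset.sum_congr rfl (fun j _ => hinner j y)
      rw [h2, ← map_sum]
      have hdy : (∑ j, Pi.single j y) = diag y := by
        have := Finset.univ_sum_single (fun _ : Fin r => y)
        exact this
      rw [hdy, hfD0]
    exact inner_self_eq_zero.mp (h (∑ j, a j))
  set b : Fin r → ℝ := fun j => (V j).sup' (hVne j) (fun y => ⟪a j, y⟫) with hb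
  have hble : ∀ j, ∀ y ∈ V j, ⟪a j, y⟫ ≤ b j := by
    intro j y hy
    exact Finset.le_sup' _ hy
  have hsumb : (∑ j, b j) < 0 := by
    have hm : ∀ j, ∃ y ∈ V j, b j = ⟪a j, y⟫ := by
      intro j
      obtain ⟨y, hy, hyeq⟩ := Finset.exists_mem_eq_sup' (hVne j) (fun y => ⟪a j, y⟫)
      exact ⟨y, hy, hyeq⟩
    choose m hmV hmeq using hm
    have hmK : m ∈ K := by
      intro j _
      exact subset_convexHull ℝ _ (hmV j)
    have h1 : f m < u := hfK m hmK
    have h2 : f m = ∑ j, b j := by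
      rw [hdecomp]
      refine (Finset.sum_congr rfl (fun j _ => ?_)).symm
      rw [hmeq j, hinner]
    linarith
  have hcpos : 0 < -(∑ j, b j) := by linarith
  refine ⟨fun j => (-(∑ j, b j))⁻¹ • a j, fun j => b j / (-(∑ j, b j)), ?_, ?_, ?_⟩
  · rw [← Finset.smul_sum, hsuma, smul_zero]
  · rw [← Finset.sum_div]
    field_simp
    rw [div_self (ne_of_lt hsumb)]
  · intro j y hy
    have h := hble j y hy
    show ⟪(-(∑ j, b j))⁻¹ • a j, y⟫ ≤ b j / (-(∑ j, b j))
    rw [real_inner_smul_left, div_eq_inv_mul (b j) _]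
    exact mul_le_mul_of_nonneg_left h (le_of_lt (inv_pos.mpr hcpos))


/-- The constraint functional `(a, b) ↦ ⟪a j, y⟫ - b j`. -/
noncomputable def Gp {d r : ℕ} (y : EuclideanSpace ℝ (Fin d)) (j : Fin r) :
    ((Fin r → EuclideanSpace ℝ (Fin d)) × (Fin r → ℝ)) →ₗ[ℝ] ℝ where
  toFun x := ⟪x.1 j, y⟫ - x.2 j
  map_add' u v := by
    simp only [Prod.fst_add, Pi.add_apply, inner_add_left, Prod.snd_add]
    ring
  map_smul' t u := by
    simp only [Prod.smul_fst, Pi.smul_apply, real_inner_smul_left, Prod.smul_snd,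
      smul_eq_mul, RingHom.id_apply]
    ring

/-- The normalization map `(a, b) ↦ (∑ a j, ∑ b j)`. -/
noncomputable def sumMapL (d r : ℕ) :
    ((Fin r → EuclideanSpace ℝ (Fin d)) × (Fin r → ℝ)) →ₗ[ℝ]
      (EuclideanSpace ℝ (Fin d) × ℝ) where
  toFun x := (∑ j, x.1 j, ∑ j, x.2 j)
  map_add' u v := by
    simp only [Prod.fst_add, Pi.add_apply, Prod.snd_add, Finset.sum_add_distrib, Prod.mk_add_mk]
  map_smul' t u := by
    simp only [Prod.smul_fst, Pi.smul_apply, Prod.smul_snd, RingHom.id_apply, Prod.smul_mk,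
      ← Finset.smul_sum]

lemma sumMapL_surj {d r : ℕ} (hr : 0 < r) : LinearMap.range (sumMapL d r) = ⊤ := by
  rw [LinearMap.range_eq_top]
  rintro ⟨e, t⟩
  refine ⟨(Pi.single ⟨0, hr⟩ e, Pi.single ⟨0, hr⟩ t), ?_⟩
  simp only [sumMapL, LinearMap.coe_mk, AddHom.coe_mk]
  congr 1 <;> simp [Pi.single_apply]
lemma finrank_ker_sumMapL {d r : ℕ} (hr : 0 < r) :
    finrank ℝ ↥(LinearMap.ker (sumMapL d r)) = (r - 1) * (d + 1) := by
  have h1 := LinearMap.finrank_range_add_finrank_ker (sumMapL d r)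
  rw [sumMapL_surj hr, finrank_top] at h1
  have h2 : finrank ℝ (EuclideanSpace ℝ (Fin d) × ℝ) = d + 1 := by
    simp [Module.finrank_prod, finrank_euclideanSpace_fin]
  have h3 : finrank ℝ ((Fin r → EuclideanSpace ℝ (Fin d)) × (Fin r → ℝ)) = r * d + r := by
    simp [Module.finrank_prod, Module.finrank_pi, Module.finrank_pi_fintype,
      finrank_euclideanSpace_fin, Finset.sum_const, Finset.card_univ]
  rw [h2, h3] at h1
  obtain ⟨r', rfl⟩ : ∃ r', r = r' + 1 := ⟨r - 1, by omega⟩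
  have h4 : (r' + 1) * d = r' * d + d := by ring
  rw [h4] at h1
  have h5 : (r' + 1 - 1) = r' := by omega
  rw [h5, Nat.mul_add, Nat.mul_one]
  omega

lemma exists_fun_of_card_le {α : Type*} {A : Finset α} (hA : A.Nonempty) {k : ℕ}
    (hk : A.card ≤ k) : ∃ w : Fin k → α, ∀ x, x ∈ A ↔ ∃ i, w i = x := by
  obtain ⟨a₀, ha₀⟩ := hA
  refine ⟨fun i => (A.toList.getD i a₀), fun x => ⟨?_, ?_⟩⟩
  · intro hx
    obtain ⟨i, hget⟩ := List.mem_iff_get.mp ((Finset.mem_toList).mpr hx)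
    have hilt : (i : ℕ) < k := lt_of_lt_of_le (by simpa [Finset.length_toList] using i.isLt) hk
    refine ⟨⟨i, hilt⟩, ?_⟩
    simp only
    rw [List.getD_eq_getElem _ _ (by simpa using i.isLt)]
    simpa using hget
  · rintro ⟨i, rfl⟩
    simp only
    rcases lt_or_ge (i : ℕ) A.toList.length with h | h
    · rw [List.getD_eq_getElem _ _ h]
      exact Finset.mem_toList.mp (List.getElem_mem _)
    · rw [List.getD_eq_default _ _ h]
      exact ha₀


lemma card_avoid {α : Type*} [Fintype α] [DecidableEq α] (r : ℕ) (φ : α → Fin r) (x₀ : α) :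
    Fintype.card {f : α → Fin r // ∀ y, y ≠ x₀ → f y ≠ φ y}
      = r * (r-1) ^ (Fintype.card α - 1) := by
  classical
  rw [Fintype.card_congr (Equiv.subtypePiEquivPi (p := fun y j => y ≠ x₀ → j ≠ φ y))]
  rw [Fintype.card_pi]
  have hcard : ∀ y : α, Fintype.card {j : Fin r // y ≠ x₀ → j ≠ φ y}
      = if y = x₀ then r else r - 1 := by
    intro y
    by_cases h : y = x₀
    · rw [if_pos h]
      subst h
      have : ∀ j : Fin r, (y ≠ y → j ≠ φ y) := fun j hy => absurd rfl hy
      rw [Fintype.card_subtype]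
      rw [Finset.filter_true_of_mem (fun j _ => this j)]
      simp
    · rw [if_neg h]
      have heq : ∀ j : Fin r, (y ≠ x₀ → j ≠ φ y) ↔ (j ≠ φ y) := fun j =>
        ⟨fun hi => hi h, fun hj _ => hj⟩
      rw [Fintype.card_subtype]
      have : Finset.univ.filter (fun j : Fin r => y ≠ x₀ → j ≠ φ y)
          = Finset.univ.filter (fun j : Fin r => j ≠ φ y) := by
        apply Finset.filter_congr
        intro j _
        simp [heq j]
      rw [this, Finset.filter_ne', Finset.card_erase_of_mem (Finset.mem_univ _)]
      simp
  calc ∏ y : α, Fintype.card {j : Fin r // y ≠ x₀ → j ≠ φ y}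
      = ∏ y : α, (if y = x₀ then r else r - 1) := Finset.prod_congr rfl (fun y _ => hcard y)
  _ = (if x₀ = x₀ then r else r - 1) * ∏ y ∈ Finset.univ.erase x₀, (if y = x₀ then r else r - 1) :=
      (Finset.mul_prod_erase Finset.univ _ (Finset.mem_univ x₀)).symm
  _ = r * (r-1) ^ (Fintype.card α - 1) := by
      rw [if_pos rfl]
      congr 1
      calc ∏ y ∈ Finset.univ.erase x₀, (if y = x₀ then r else r - 1)
          = ∏ _y ∈ Finset.univ.erase x₀, (r - 1) := by
            apply Finset.prod_congr rfl
            intro y hy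
            rw [if_neg (Finset.mem_erase.mp hy).1]
      _ = (r-1) ^ (Fintype.card α - 1) := by
            rw [Finset.prod_const, Finset.card_erase_of_mem (Finset.mem_univ _),
              Finset.card_univ]

end Geometry

set_option maxHeartbeats 1000000 in
lemma witness_family {d r : ℕ} (hd : 0 < d) (hr : 2 ≤ r)
    (S : Finset (EuclideanSpace ℝ (Fin d))) (hS : S.Nonempty) :
    ∃ φ : ((Fin ((r - 1) * (d + 1)) → (S × Fin r)) ⊕ (Fin r)) → (S → Fin r),
      ∀ f : S → Fin r, ¬ IsTverbergLabeling S f → ∃ c, ∀ y, f y ≠ φ c y := by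
  classical
  set k := (r - 1) * (d + 1) with hk
  have hk1 : 0 < k := Nat.mul_pos (by omega) (by omega)
  set Zset : (Fin k → (S × Fin r)) →
      Set ((Fin r → EuclideanSpace ℝ (Fin d)) × (Fin r → ℝ)) :=
    fun w => {x | (∑ j, x.1 j) = 0 ∧ (∑ j, x.2 j) = -1 ∧
      ∀ i, ⟪x.1 (w i).2, ((w i).1 : EuclideanSpace ℝ (Fin d))⟫ = x.2 (w i).2} with hZdef
  set cert : (Fin k → (S × Fin r)) →
      ((Fin r → EuclideanSpace ℝ (Fin d)) × (Fin r → ℝ)) :=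
    fun w => if h : (Zset w).Nonempty then h.choose else 0 with hcert
  have hcertmem : ∀ w, (Zset w).Nonempty → cert w ∈ Zset w := by
    intro w h
    rw [hcert]
    simp only
    rw [dif_pos h]
    exact h.choose_spec
  set φ : ((Fin k → (S × Fin r)) ⊕ (Fin r)) → (S → Fin r) :=
    Sum.elim
      (fun w y => if h : ∃ j, (cert w).2 j < ⟪(cert w).1 j, (y : EuclideanSpace ℝ (Fin d))⟫
        then h.choose else (w ⟨0, hk1⟩).2)
      (fun j _ => j) with hφ
  refine ⟨φ, ?_⟩
  intro f hnT
  by_cases hsurj : ∀ j, ∃ x : S, f x = j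
  case neg =>
    push_neg at hsurj
    obtain ⟨j, hj⟩ := hsurj
    exact ⟨Sum.inr j, fun y => by simpa [hφ] using hj y⟩
  case pos =>
  have hemp : (⋂ j : Fin r, convexHull ℝ
      (Subtype.val '' (f ⁻¹' {j}) : Set (EuclideanSpace ℝ (Fin d)))) = ∅ :=
    Set.not_nonempty_iff_eq_empty.mp (fun h => hnT ⟨hsurj, h⟩)
  set V : Fin r → Finset (EuclideanSpace ℝ (Fin d)) :=
    fun j => (S.attach.filter (fun y => f y = j)).image Subtype.val with hV
  have hVset : ∀ j, (V j : Set (EuclideanSpace ℝ (Fin d))) = Subtype.val '' (f ⁻¹' {j}) := by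
    intro j
    ext z
    simp only [hV, Finset.coe_image, Finset.coe_filter, Finset.mem_attach, true_and,
      Set.mem_image, Set.mem_setOf_eq, Set.mem_preimage, Set.mem_singleton_iff]
  have hVne : ∀ j, (V j).Nonempty := by
    intro j
    obtain ⟨x, hx⟩ := hsurj j
    exact ⟨x, Finset.mem_image.mpr ⟨x, Finset.mem_filter.mpr ⟨Finset.mem_attach _ _, hx⟩, rfl⟩⟩
  have hempty' : (⋂ j, convexHull ℝ ((V j : Set (EuclideanSpace ℝ (Fin d))))) = ∅ := by
    simp_rw [hVset]
    exact hemp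
  obtain ⟨a₀, b₀, hsa, hsb, hcon⟩ := separation_cert V hVne hempty'
  set x₀ : (Fin r → EuclideanSpace ℝ (Fin d)) × (Fin r → ℝ) := (a₀, b₀) with hx₀
  set w₁ : (Fin r → EuclideanSpace ℝ (Fin d)) × (Fin r → ℝ) :=
    (0, fun _ => -(1:ℝ)/r) with hw₁
  have hrR : (0:ℝ) < r := by
    have : (2:ℝ) ≤ r := by exact_mod_cast hr
    linarith
  have hsw₁ : sumMapL d r w₁ = (0, -1) := by
    simp only [sumMapL, LinearMap.coe_mk, AddHom.coe_mk, hw₁]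
    congr 1
    · simp
    · rw [Finset.sum_const, Finset.card_univ, Fintype.card_fin, nsmul_eq_mul]
      field_simp
  have hsx₀ : sumMapL d r x₀ = (0, -1) := by
    simp only [sumMapL, LinearMap.coe_mk, AddHom.coe_mk, hx₀, hsa, hsb]
  have hneg : (-1:ℝ)/r = -(1/r) := by ring
  have hGpw₁ : ∀ (y : EuclideanSpace ℝ (Fin d)) (j : Fin r), Gp y j w₁ = 1/r := by
    intro y j
    show ⟪(0 : Fin r → EuclideanSpace ℝ (Fin d)) j, y⟫ - (-1/(r:ℝ)) = 1/r
    rw [show (0 : Fin r → EuclideanSpace ℝ (Fin d)) j = 0 from rfl, inner_zero_left]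
    ring
  set U := LinearMap.ker (sumMapL d r) with hU
  set g : S → (↥U →ₗ[ℝ] ℝ) :=
    fun y => (Gp (y : EuclideanSpace ℝ (Fin d)) (f y)).comp U.subtype with hg
  have hmemU : x₀ - w₁ ∈ U := by
    rw [hU, LinearMap.mem_ker, map_sub, hsx₀, hsw₁, sub_self]
  have hmf : ∃ u : ↥U, ∀ y : S, g y u ≤ -(1:ℝ)/r := by
    refine ⟨⟨x₀ - w₁, hmemU⟩, fun y => ?_⟩
    have h1 : g y ⟨x₀ - w₁, hmemU⟩ = Gp (y : EuclideanSpace ℝ (Fin d)) (f y) x₀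
        - Gp (y : EuclideanSpace ℝ (Fin d)) (f y) w₁ := by
      simp [hg, map_sub]
    rw [h1, hGpw₁]
    have h2 : Gp (y : EuclideanSpace ℝ (Fin d)) (f y) x₀ ≤ 0 := by
      have hyV : (y : EuclideanSpace ℝ (Fin d)) ∈ V (f y) :=
        Finset.mem_image.mpr ⟨y, Finset.mem_filter.mpr ⟨Finset.mem_attach _ _, rfl⟩, rfl⟩
      have := hcon (f y) _ hyV
      simp only [Gp, LinearMap.coe_mk, AddHom.coe_mk, hx₀]
      linarith
    linarith [hneg]
  obtain ⟨T, hTcard, ⟨u₁, hu₁⟩, hTsol⟩ := minimal_face g (fun _ => -(1:ℝ)/r) hmf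
  have hTk : T.card ≤ k := by
    rw [hk]
    calc T.card ≤ finrank ℝ ↥U := hTcard
    _ = (r - 1) * (d + 1) := finrank_ker_sumMapL (by omega)
  have hTne : T.Nonempty := by
    rw [Finset.nonempty_iff_ne_empty]
    intro hTe
    obtain ⟨y₀, hy₀⟩ := hS
    have := hTsol 0 (by simp [hTe]) ⟨y₀, hy₀⟩
    have h0 : g ⟨y₀, hy₀⟩ (0 : ↥U) = 0 := map_zero _
    rw [h0] at this
    have : (0:ℝ) < 1/r := by positivity
    linarith [hneg]
  set pairs : Finset (S × Fin r) := T.image (fun y => (y, f y)) with hpairs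
  have hpne : pairs.Nonempty := hTne.image _
  have hpcard : pairs.card ≤ k := le_trans Finset.card_image_le hTk
  obtain ⟨w, hw⟩ := exists_fun_of_card_le hpne hpcard
  -- membership in U of certificate candidates
  have memU_of_sums : ∀ x : (Fin r → EuclideanSpace ℝ (Fin d)) × (Fin r → ℝ),
      (∑ j, x.1 j) = 0 → (∑ j, x.2 j) = -1 → x - w₁ ∈ U := by
    intro x h1 h2
    rw [hU, LinearMap.mem_ker, map_sub, hsw₁]
    have : sumMapL d r x = (0, -1) := by
      simp only [sumMapL, LinearMap.coe_mk, AddHom.coe_mk, h1, h2]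
    rw [this, sub_self]
  -- Zset w is nonempty
  have hZne : (Zset w).Nonempty := by
    refine ⟨w₁ + (u₁ : (Fin r → EuclideanSpace ℝ (Fin d)) × (Fin r → ℝ)), ?_, ?_, ?_⟩
    · have hker : sumMapL d r (u₁ : (Fin r → EuclideanSpace ℝ (Fin d)) × (Fin r → ℝ)) = 0 :=
        LinearMap.mem_ker.mp u₁.2
      have h1 : (∑ j, (u₁ : (Fin r → EuclideanSpace ℝ (Fin d)) × (Fin r → ℝ)).1 j) = 0 := by
        have h := congrArg Prod.fst hker
        simp only [sumMapL, LinearMap.coe_mk, AddHom.coe_mk, Prod.fst_zero] at h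
        exact h
      simp only [Prod.fst_add, Pi.add_apply, Finset.sum_add_distrib, h1, hw₁]
      simp
    · have hker : sumMapL d r (u₁ : (Fin r → EuclideanSpace ℝ (Fin d)) × (Fin r → ℝ)) = 0 :=
        LinearMap.mem_ker.mp u₁.2
      have h2 : (∑ j, (u₁ : (Fin r → EuclideanSpace ℝ (Fin d)) × (Fin r → ℝ)).2 j) = 0 := by
        have h := congrArg Prod.snd hker
        simp only [sumMapL, LinearMap.coe_mk, AddHom.coe_mk, Prod.snd_zero] at h
        exact h
      simp only [Prod.snd_add, Pi.add_apply, Finset.sum_add_distrib, h2, hw₁]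
      rw [Finset.sum_const, Finset.card_univ, Fintype.card_fin, nsmul_eq_mul]
      field_simp
      ring
    · intro i
      have hwi : w i ∈ pairs := (hw (w i)).mpr ⟨i, rfl⟩
      rw [hpairs, Finset.mem_image] at hwi
      obtain ⟨y, hyT, hyw⟩ := hwi
      rw [← hyw]
      have := hu₁ y hyT
      have hgu : Gp (y : EuclideanSpace ℝ (Fin d)) (f y)
          (u₁ : (Fin r → EuclideanSpace ℝ (Fin d)) × (Fin r → ℝ)) = -(1:ℝ)/r := by
        simpa [hg] using this
      have hGpx : Gp (y : EuclideanSpace ℝ (Fin d)) (f y)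
          (w₁ + (u₁ : (Fin r → EuclideanSpace ℝ (Fin d)) × (Fin r → ℝ))) = 0 := by
        rw [map_add, hGpw₁, hgu]
        ring
      simp only [Gp, LinearMap.coe_mk, AddHom.coe_mk] at hGpx
      linarith [hGpx]
  have hcw := hcertmem w hZne
  obtain ⟨hcw1, hcw2, hcw3⟩ := hcw
  -- the certificate separates f's parts
  have hQ : ∀ y : S, ⟪(cert w).1 (f y), (y : EuclideanSpace ℝ (Fin d))⟫ ≤ (cert w).2 (f y) := by
    have hcwU : cert w - w₁ ∈ U := memU_of_sums _ hcw1 hcw2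
    have heq : ∀ y ∈ T, g y ⟨cert w - w₁, hcwU⟩ = -(1:ℝ)/r := by
      intro y hyT
      have hwi : (y, f y) ∈ pairs := Finset.mem_image.mpr ⟨y, hyT, rfl⟩
      obtain ⟨i, hieq⟩ := (hw _).mp hwi
      have h3 := hcw3 i
      rw [hieq] at h3
      have hGpc : Gp (y : EuclideanSpace ℝ (Fin d)) (f y) (cert w) = 0 := by
        simp only [Gp, LinearMap.coe_mk, AddHom.coe_mk]
        linarith [h3]
      have : g y ⟨cert w - w₁, hcwU⟩ = Gp (y : EuclideanSpace ℝ (Fin d)) (f y) (cert w)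
          - Gp (y : EuclideanSpace ℝ (Fin d)) (f y) w₁ := by
        simp [hg, map_sub]
      rw [this, hGpc, hGpw₁]
      ring
    intro y
    have := hTsol ⟨cert w - w₁, hcwU⟩ heq y
    have hgy : g y ⟨cert w - w₁, hcwU⟩ = Gp (y : EuclideanSpace ℝ (Fin d)) (f y) (cert w)
        - Gp (y : EuclideanSpace ℝ (Fin d)) (f y) w₁ := by
      simp [hg, map_sub]
    rw [hgy, hGpw₁] at this
    have hGple : Gp (y : EuclideanSpace ℝ (Fin d)) (f y) (cert w) ≤ 0 := by linarith [hneg]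
    simp only [Gp, LinearMap.coe_mk, AddHom.coe_mk] at hGple
    linarith
  have hφprop : ∀ (y : S)
      (hEx : ∃ j, (cert w).2 j < ⟪(cert w).1 j, (y : EuclideanSpace ℝ (Fin d))⟫),
      (cert w).2 (φ (Sum.inl w) y) <
        ⟪(cert w).1 (φ (Sum.inl w) y), (y : EuclideanSpace ℝ (Fin d))⟫ := by
    intro y hEx
    have : φ (Sum.inl w) y = if h : ∃ j, (cert w).2 j <
        ⟪(cert w).1 j, (y : EuclideanSpace ℝ (Fin d))⟫ then h.choose else (w ⟨0, hk1⟩).2 := rfl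
    rw [this, dif_pos hEx]
    exact hEx.choose_spec
  refine ⟨Sum.inl w, fun y => ?_⟩
  have hEx : ∃ j, (cert w).2 j < ⟪(cert w).1 j, (y : EuclideanSpace ℝ (Fin d))⟫ := by
    by_contra hno
    push_neg at hno
    have hsum : ∑ j, (⟪(cert w).1 j, (y : EuclideanSpace ℝ (Fin d))⟫ - (cert w).2 j) ≤ 0 :=
      Finset.sum_nonpos (fun j _ => by linarith [hno j])
    have h1 : ∑ j, ⟪(cert w).1 j, (y : EuclideanSpace ℝ (Fin d))⟫
        = ⟪∑ j, (cert w).1 j, (y : EuclideanSpace ℝ (Fin d))⟫ := (sum_inner _ _ _).symm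
    rw [Finset.sum_sub_distrib, h1, hcw1, hcw2] at hsum
    rw [inner_zero_left] at hsum
    linarith
  intro hfy
  have hspec := hφprop y hEx
  rw [← hfy] at hspec
  exact absurd (hQ y) (not_le.mpr hspec)


set_option maxHeartbeats 1000000 in
/-- If each of the `n` points of `S ⊂ ℝ^d` is assigned one of `r` labels uniformly and
independently, the probability that the resulting partition is a Tverberg partition into
`r` parts of maximal degree `n(r-1)` in the Tverberg graph is at least
`1 - r^{(r-1)(d+1)} n^{(r-1)(d+1)} exp(-2(n-r)²/(nr²))`. -/
theorem random_labeling_tverberg (d r n : ℕ) (hd : 0 < d) (hr : 0 < r) (hn : 0 < n)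
    (S : Finset (EuclideanSpace ℝ (Fin d))) (hS : S.card = n) :
    1 - (r : ℝ) ^ ((r - 1) * (d + 1)) * (n : ℝ) ^ ((r - 1) * (d + 1)) *
        Real.exp (-2 * ((n : ℝ) - (r : ℝ)) ^ 2 / ((n : ℝ) * (r : ℝ) ^ 2)) ≤
      ({f : S → Fin r | IsMaxDegreeTverbergLabeling S f}.ncard : ℝ) / (r : ℝ) ^ n := by
  classical
  have hSfin : Fintype.card S = n := by rw [Fintype.card_coe, hS]
  have hSne : S.Nonempty := Finset.card_pos.mp (by omega)
  rcases Nat.lt_or_ge r 2 with hr1 | hr2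
  · -- r = 1
    have hre : r = 1 := by omega
    subst hre
    have hall : {f : S → Fin 1 | IsMaxDegreeTverbergLabeling S f} = Set.univ := by
      ext f
      simp only [Set.mem_setOf_eq, Set.mem_univ, iff_true]
      obtain ⟨x₀, hx₀⟩ := hSne
      refine ⟨⟨fun j => ⟨⟨x₀, hx₀⟩, Subsingleton.elim _ _⟩, ⟨x₀, ?_⟩⟩, fun x j hj =>
        absurd (Subsingleton.elim j (f x)) hj⟩
      apply Set.mem_iInter.mpr
      intro j
      apply subset_convexHull
      exact ⟨⟨x₀, hx₀⟩, Subsingleton.elim _ _, rfl⟩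
    rw [hall]
    have h1 : (Set.univ : Set (S → Fin 1)).ncard = 1 := by
      rw [Set.ncard_univ, Nat.card_eq_fintype_card, Fintype.card_fun]
      simp
    rw [h1]
    have hexp := Real.exp_pos (-2 * ((n:ℝ) - (1:ℕ)) ^ 2 / ((n:ℝ) * ((1:ℕ):ℝ) ^ 2))
    simp only [Nat.cast_one, one_pow, Nat.sub_self, Nat.zero_mul, pow_zero, one_mul,
      Nat.cast_ofNat] at hexp ⊢
    rw [div_one]
    nlinarith [Real.exp_pos (-2 * ((n:ℝ) - 1) ^ 2 / ((n:ℝ) * 1 ^ 2))]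
  · -- r ≥ 2
    have hnR : (0:ℝ) < n := by exact_mod_cast hn
    have hrR : (0:ℝ) < r := by positivity
    have hrpow : (0:ℝ) < (r:ℝ)^n := by positivity
    have hncard0 : (0:ℝ) ≤ ({f : S → Fin r | IsMaxDegreeTverbergLabeling S f}.ncard : ℝ) :=
      Nat.cast_nonneg _
    have hEexp : Real.exp (-2 * ((n:ℝ) - r)^2 / ((n:ℝ) * (r:ℝ)^2))
        = (Real.exp (2 * ((n:ℝ) - r)^2 / ((n:ℝ) * (r:ℝ)^2)))⁻¹ := by
      rw [← Real.exp_neg]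
      congr 1
      ring
    have hexppos := Real.exp_pos (2 * ((n:ℝ) - r)^2 / ((n:ℝ) * (r:ℝ)^2))
    have hpowsplit : (r:ℝ)^((r-1)*(d+1)) * (n:ℝ)^((r-1)*(d+1)) = ((n:ℝ)*r)^((r-1)*(d+1)) := by
      rw [mul_pow]
      ring
    rcases le_or_gt (Real.exp (2 * ((n:ℝ) - r)^2 / ((n:ℝ) * (r:ℝ)^2)))
        (((n:ℝ)*r)^((r-1)*(d+1))) with htriv | hhard
    · -- trivial case: the lower bound is non-positive
      have h1 : (1:ℝ) ≤ (r:ℝ)^((r-1)*(d+1)) * (n:ℝ)^((r-1)*(d+1)) *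
          Real.exp (-2 * ((n:ℝ) - r)^2 / ((n:ℝ) * (r:ℝ)^2)) := by
        rw [hEexp, hpowsplit, ← div_eq_mul_inv, le_div_iff₀ hexppos, one_mul]
        exact htriv
      have h2 : (0:ℝ) ≤ ({f : S → Fin r | IsMaxDegreeTverbergLabeling S f}.ncard : ℝ) / (r:ℝ)^n :=
        div_nonneg hncard0 (le_of_lt hrpow)
      linarith
    · -- hard case: union bound over witnesses
      obtain ⟨φ, hφ⟩ := witness_family hd hr2 S hSne
      set Bad : Finset (S → Fin r) :=
        Finset.univ.filter (fun f => ¬ IsMaxDegreeTverbergLabeling S f) with hBad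
      set Cov : (((Fin ((r-1)*(d+1)) → (S × Fin r)) ⊕ Fin r) × S) → Finset (S → Fin r) :=
        fun p => Finset.univ.filter (fun f => ∀ y, y ≠ p.2 → f y ≠ φ p.1 y) with hCov
      have hBsub : Bad ⊆ Finset.univ.biUnion Cov := by
        intro f hf
        have hbad : ¬ IsMaxDegreeTverbergLabeling S f := (Finset.mem_filter.mp hf).2
        have hwit : ∃ c x₀, ∀ y, y ≠ x₀ → f y ≠ φ c y := by
          by_cases hTv : IsTverbergLabeling S f
          · rw [IsMaxDegreeTverbergLabeling] at hbad
            push_neg at hbad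
            obtain ⟨x₀, j₀, hj₀, hnot⟩ := hbad hTv
            obtain ⟨c, hc⟩ := hφ _ hnot
            refine ⟨c, x₀, fun y hy => ?_⟩
            have h := hc y
            rwa [Function.update_of_ne hy] at h
          · obtain ⟨c, hc⟩ := hφ f hTv
            obtain ⟨x₀, hx₀⟩ := hSne
            exact ⟨c, ⟨x₀, hx₀⟩, fun y _ => hc y⟩
        obtain ⟨c, x₀, hcx⟩ := hwit
        exact Finset.mem_biUnion.mpr ⟨(c, x₀), Finset.mem_univ _,
          Finset.mem_filter.mpr ⟨Finset.mem_univ _, hcx⟩⟩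
      have hCovCard : ∀ p, (Cov p).card = r * (r-1)^(n-1) := by
        intro p
        have h1 : (Cov p).card = Fintype.card {f : S → Fin r // ∀ y, y ≠ p.2 → f y ≠ φ p.1 y} :=
          (Fintype.card_subtype _).symm
        rw [h1, card_avoid r (φ p.1) p.2, hSfin]
      have hPTcard : Fintype.card (((Fin ((r-1)*(d+1)) → (S × Fin r)) ⊕ Fin r) × S)
          = (((n*r)^((r-1)*(d+1)) + r) * n) := by
        rw [Fintype.card_prod, Fintype.card_sum, Fintype.card_fun, Fintype.card_prod,
          hSfin, Fintype.card_fin, Fintype.card_fin]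
      have hcount : Bad.card ≤ (((n*r)^((r-1)*(d+1)) + r) * n) * (r * (r-1)^(n-1)) := by
        calc Bad.card ≤ (Finset.univ.biUnion Cov).card := Finset.card_le_card hBsub
        _ ≤ ∑ p : (((Fin ((r-1)*(d+1)) → (S × Fin r)) ⊕ Fin r) × S), (Cov p).card := Finset.card_biUnion_le
        _ = ∑ _p : (((Fin ((r-1)*(d+1)) → (S × Fin r)) ⊕ Fin r) × S), (r * (r-1)^(n-1)) :=
            Finset.sum_congr rfl (fun p _ => hCovCard p)
        _ = Fintype.card (((Fin ((r-1)*(d+1)) → (S × Fin r)) ⊕ Fin r) × S) * (r * (r-1)^(n-1)) := by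
            rw [Finset.sum_const, Finset.card_univ, smul_eq_mul]
        _ = (((n*r)^((r-1)*(d+1)) + r) * n) * (r * (r-1)^(n-1)) := by rw [hPTcard]
      have hBadR : (Bad.card : ℝ) ≤ (((n:ℝ)*r)^((r-1)*(d+1)) + r) *
          ((n:ℝ) * ((r:ℝ) * ((r:ℝ)-1)^(n-1))) := by
        have hcast : ((((n*r)^((r-1)*(d+1)) + r) * n) * (r * (r-1)^(n-1)) : ℝ)
            = (((n:ℝ)*r)^((r-1)*(d+1)) + r) * ((n:ℝ) * ((r:ℝ) * ((r:ℝ)-1)^(n-1))) := by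
          push_cast [Nat.cast_sub (show 1 ≤ r by omega)]
          ring
        calc (Bad.card : ℝ) ≤ ((((n*r)^((r-1)*(d+1)) + r) * n) * (r * (r-1)^(n-1)) : ℕ) := by
              exact_mod_cast hcount
        _ = _ := by push_cast [Nat.cast_sub (show 1 ≤ r by omega)]; ring
      have hana := analytic_bound d r n (by omega) hr2 (by omega) hhard
      have hBadR2 : (Bad.card : ℝ) * Real.exp (2 * ((n:ℝ) - r)^2 / ((n:ℝ) * (r:ℝ)^2))
          ≤ ((n:ℝ)*r)^((r-1)*(d+1)) * (r:ℝ)^n :=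
        le_trans (mul_le_mul_of_nonneg_right hBadR (le_of_lt hexppos)) hana
      -- convert to the probability statement
      have hGeq : ({f : S → Fin r | IsMaxDegreeTverbergLabeling S f}.ncard : ℝ)
          = (r:ℝ)^n - Bad.card := by
        have h1 : {f : S → Fin r | IsMaxDegreeTverbergLabeling S f}.ncard
            = (Finset.univ.filter (fun f : S → Fin r => IsMaxDegreeTverbergLabeling S f)).card := by
          rw [Set.ncard_eq_toFinset_card']
          congr 1
          ext f
          simp
        have h2 : (Finset.univ.filter (fun f : S → Fin r => IsMaxDegreeTverbergLabeling S f)).card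
            + Bad.card = r^n := by
          rw [hBad, Finset.card_filter_add_card_filter_not, Finset.card_univ,
            Fintype.card_fun, Fintype.card_fin, hSfin]
        have h3 : (({f : S → Fin r | IsMaxDegreeTverbergLabeling S f}.ncard : ℕ) : ℝ)
            + (Bad.card : ℝ) = (r:ℝ)^n := by
          rw [h1]
          exact_mod_cast congrArg (Nat.cast : ℕ → ℝ) h2
        linarith
      rw [hGeq, sub_div, div_self (ne_of_gt hrpow)]
      have hfinal : (Bad.card : ℝ) / (r:ℝ)^n ≤ (r:ℝ)^((r-1)*(d+1)) * (n:ℝ)^((r-1)*(d+1)) *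
          Real.exp (-2 * ((n:ℝ) - r)^2 / ((n:ℝ) * (r:ℝ)^2)) := by
        rw [hEexp, hpowsplit, div_le_iff₀ hrpow]
        have h4 : (Bad.card : ℝ) ≤ ((n:ℝ)*r)^((r-1)*(d+1)) * (r:ℝ)^n *
            (Real.exp (2 * ((n:ℝ) - r)^2 / ((n:ℝ) * (r:ℝ)^2)))⁻¹ := by
          rw [← div_eq_mul_inv, le_div_iff₀ hexppos]
          exact hBadR2
        calc (Bad.card : ℝ) ≤ _ := h4
        _ = ((n:ℝ)*r)^((r-1)*(d+1)) *
            (Real.exp (2 * ((n:ℝ) - r)^2 / ((n:ℝ) * (r:ℝ)^2)))⁻¹ * (r:ℝ)^n := by ring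
      linarith
end
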